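/- arXiv:1603.04381 — 7 statements merged into one kernel-verified Lean document; each statement's English description precedes it below -/
import Mathlib

section
/- Let X ⊂ ℝ^d, k ≥ 1, and let (X_1, f(X_1)), …, (X_{t+1}, f(X_{t+1})) be a sample of t+1 evaluations of f : X → ℝ with pairwise distinct values, ordered so that f(X_{(1)}) < ⋯ < f(X_{(t+1)}). Then there exists a polynomial function h : ℝ^d → ℝ of total degree at most k with sgn(h(X_i)−h(X_j)) = sgn(f(X_i)−f(X_j)) for all i, j, if and only if the polyhedral set {λ ∈ ℝ^t : M^{Φ_k}_t λᵀ = 0, ⟨1, λ⟩ = 1, λ ⪰ 0} is empty, where M^{Φ_k}_t is the D×t matrix whose i-th column is Φ_k(X_{(i+1)}) − Φ_k(X_{(i)}); equivalently, the zero vector does not belong to the convex hull of {Φ_k(X_{(i+1)}) − Φ_k(X_{(i)}) : 1 ≤ i ≤ t}. -/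
open MeasureTheory ProbabilityTheory Set
open scoped ENNReal NNReal BigOperators

noncomputable section

/-- Euclidean space `ℝ^d`. -/
abbrev Euc (d : ℕ) := EuclideanSpace ℝ (Fin d)

/-- The uniform probability measure on a set `s` (w.r.t. the ambient volume measure). -/
def unifOn {E : Type*} [MeasureSpace E] (s : Set E) : Measure E :=
  (volume s)⁻¹ • volume.restrict s

instance unifOn.instIsFiniteMeasure {E : Type*} [MeasureSpace E] (s : Set E) :
    IsFiniteMeasure (unifOn s) := by
  constructor
  rw [unifOn, Measure.smul_apply, Measure.restrict_apply_univ, smul_eq_mul]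
  rcases eq_or_ne (volume s) 0 with h | h
  · simp [h]
  rcases eq_or_ne (volume s) ⊤ with h' | h'
  · simp [h, h']
  · rw [ENNReal.inv_mul_cancel h h']; exact ENNReal.one_lt_top

/-- `f` has a continuous induced ranking rule on `Xset`. -/
def HasContinuousRanking {d : ℕ} (Xset : Set (Euc d)) (f : Euc d → ℝ) : Prop :=
  ∃ h : Euc d → ℝ, ContinuousOn h Xset ∧
    ∀ x ∈ Xset, ∀ x' ∈ Xset, Real.sign (f x - f x') = Real.sign (h x - h x')

/-- `f` has `(c, α)`-regular level sets on `Xset` with unique global maximizer `xs`. -/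
def RegularLevelSets {d : ℕ} (Xset : Set (Euc d)) (f : Euc d → ℝ) (xs : Euc d)
    (c α : ℝ) : Prop :=
  xs ∈ Xset ∧ (∀ x ∈ Xset, f x ≤ f xs) ∧ (∀ x ∈ Xset, f x = f xs → x = xs) ∧
    ∀ x ∈ Xset, ∀ x' ∈ Xset, f x = f x' →
      dist xs x ≤ c * dist xs x' ^ ((1 : ℝ) / (1 + α))

/-- Inner radius of a set. -/
def inradius {d : ℕ} (s : Set (Euc d)) : ℝ :=
  sSup {r : ℝ | 0 < r ∧ ∃ x ∈ s, Metric.closedBall x r ⊆ s}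

/-- A RankOpt-type process: `X 0` is uniform on `Xset` and, conditionally on the history
`(X 0, …, X t)`, the point `X (t+1)` is uniform on a measurable set of positive volume squeezed
between the current upper level set and `Xset`. -/
def IsRankOptProcess {d : ℕ} {Ω : Type*} [MeasurableSpace Ω] (P : Measure Ω)
    [IsFiniteMeasure P] (Xset : Set (Euc d)) (f : Euc d → ℝ) (n : ℕ)
    (X : Fin n → Ω → Euc d) : Prop :=
  (∀ i, Measurable (X i)) ∧
  (∀ h0 : 0 < n, P.map (X ⟨0, h0⟩) = unifOn Xset) ∧
  ∀ (t : ℕ) (ht : t + 1 < n),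
    ∀ᵐ ω ∂P, ∃ A : Set (Euc d), MeasurableSet A ∧ 0 < volume A ∧
      {x ∈ Xset | ∀ i : Fin (t + 1), f (X (Fin.castLE ht.le i) ω) ≤ f x} ⊆ A ∧
      A ⊆ Xset ∧
      condDistrib (X ⟨t + 1, ht⟩)
        (fun ω' => fun i : Fin (t + 1) => X (Fin.castLE ht.le i) ω') P
        (fun i : Fin (t + 1) => X (Fin.castLE ht.le i) ω) = unifOn A

/-- A Pure Adaptive Search: `X 0` is uniform on `Xset` and, conditionally on `X t`,
the point `X (t+1)` is uniform on the upper level set of `f (X t)`. -/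
def IsPureAdaptiveSearch {d : ℕ} {Ω : Type*} [MeasurableSpace Ω] (P : Measure Ω)
    [IsFiniteMeasure P] (Xset : Set (Euc d)) (f : Euc d → ℝ) (n : ℕ)
    (X : Fin n → Ω → Euc d) : Prop :=
  (∀ i, Measurable (X i)) ∧
  (∀ h0 : 0 < n, P.map (X ⟨0, h0⟩) = unifOn Xset) ∧
  ∀ (t : ℕ) (ht : t + 1 < n),
    ∀ᵐ ω ∂P,
      condDistrib (X ⟨t + 1, ht⟩) (X ⟨t, by omega⟩) P (X ⟨t, by omega⟩ ω)
        = unifOn {x ∈ Xset | f (X (⟨t, by omega⟩ : Fin n) ω) ≤ f x}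

/-- Empirical ranking loss of a ranking rule `r` over the sample `x` with values `f ∘ x`. -/
def empLoss {d : ℕ} (f : Euc d → ℝ) {t : ℕ} (x : Fin t → Euc d)
    (r : Euc d → Euc d → ℝ) : ℝ :=
  (2 / ((t : ℝ) * ((t : ℝ) - 1))) * ∑ i : Fin t, ∑ j : Fin t,
    if i < j ∧ r (x i) (x j) ≠ Real.sign (f (x i) - f (x j)) then (1 : ℝ) else 0

/-- Index of the smallest ranking structure of the nested sequence `R` containing a ranking rule
consistent with the sample. -/
def khat {d : ℕ} (f : Euc d → ℝ) (R : ℕ → Set (Euc d → Euc d → ℝ)) {t : ℕ}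
    (x : Fin t → Euc d) : ℕ :=
  sInf {k : ℕ | 1 ≤ k ∧ ∃ r ∈ R k, empLoss f x r = 0}

/-- The exploitation sampling region of AdaRankOpt, given the history `x` and the current best
point `xb`. -/
def adaSet {d : ℕ} (Xset : Set (Euc d)) (f : Euc d → ℝ)
    (R : ℕ → Set (Euc d → Euc d → ℝ)) {t : ℕ} (x : Fin t → Euc d) (xb : Euc d) :
    Set (Euc d) :=
  {y ∈ Xset | ∃ r ∈ R (khat f R x), empLoss f x r = 0 ∧ 0 ≤ r y xb}

/-- Bernoulli measure with parameter `p` on `Bool`. -/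
def bern (p : ℝ) : Measure Bool :=
  ENNReal.ofReal p • Measure.dirac true + ENNReal.ofReal (1 - p) • Measure.dirac false

instance bern.instIsFiniteMeasure (p : ℝ) : IsFiniteMeasure (bern p) := by
  constructor
  rw [bern]
  simp only [Measure.add_apply, Measure.smul_apply, measure_univ, smul_eq_mul, mul_one]
  exact ENNReal.add_lt_top.mpr ⟨ENNReal.ofReal_lt_top, ENNReal.ofReal_lt_top⟩

/-- An AdaRankOpt process with exploration parameter `p` and ranking structures `R`. -/
def IsAdaRankOptProcess {d : ℕ} {Ω : Type*} [MeasurableSpace Ω] (P : Measure Ω)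
    [IsFiniteMeasure P] (Xset : Set (Euc d)) (f : Euc d → ℝ) (p : ℝ)
    (R : ℕ → Set (Euc d → Euc d → ℝ)) (n : ℕ) (X : Fin n → Ω → Euc d) : Prop :=
  ∃ B : Fin n → Ω → Bool,
    (∀ i, Measurable (X i)) ∧ (∀ i, Measurable (B i)) ∧
    (∀ h0 : 0 < n, P.map (X ⟨0, h0⟩) = unifOn Xset) ∧
    ∀ (t : ℕ) (ht : t + 1 < n),
      P.map (B ⟨t + 1, ht⟩) = bern p ∧
      IndepFun (B ⟨t + 1, ht⟩)
        (fun ω => ((fun i : Fin (t + 1) => X (Fin.castLE ht.le i) ω),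
                   (fun i : Fin (t + 1) => B (Fin.castLE ht.le i) ω))) P ∧
      ∃ ihat : Ω → Fin (t + 1), Measurable ihat ∧
        (∀ᵐ ω ∂P, ∀ j : Fin (t + 1),
          f (X (Fin.castLE ht.le j) ω) ≤ f (X (Fin.castLE ht.le (ihat ω)) ω)) ∧
        (∀ᵐ ω ∂P,
          condDistrib (X ⟨t + 1, ht⟩)
            (fun ω' => ((fun i : Fin (t + 1) => X (Fin.castLE ht.le i) ω'),
                        B ⟨t + 1, ht⟩ ω')) P
            ((fun i : Fin (t + 1) => X (Fin.castLE ht.le i) ω), B ⟨t + 1, ht⟩ ω)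
          = if B ⟨t + 1, ht⟩ ω then unifOn Xset
            else unifOn (adaSet Xset f R
                  (fun i : Fin (t + 1) => X (Fin.castLE ht.le i) ω)
                  (X (Fin.castLE ht.le (ihat ω)) ω)))

/-- An AdaRankOpt process indexed by all of `ℕ`. -/
def IsAdaRankOptProcessNat {d : ℕ} {Ω : Type*} [MeasurableSpace Ω] (P : Measure Ω)
    [IsFiniteMeasure P] (Xset : Set (Euc d)) (f : Euc d → ℝ) (p : ℝ)
    (R : ℕ → Set (Euc d → Euc d → ℝ)) (X : ℕ → Ω → Euc d) : Prop :=
  ∃ B : ℕ → Ω → Bool,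
    (∀ i, Measurable (X i)) ∧ (∀ i, Measurable (B i)) ∧
    P.map (X 0) = unifOn Xset ∧
    ∀ t : ℕ,
      P.map (B (t + 1)) = bern p ∧
      IndepFun (B (t + 1))
        (fun ω => ((fun i : Fin (t + 1) => X i ω),
                   (fun i : Fin (t + 1) => B i ω))) P ∧
      ∃ ihat : Ω → Fin (t + 1), Measurable ihat ∧
        (∀ᵐ ω ∂P, ∀ j : Fin (t + 1), f (X j ω) ≤ f (X (ihat ω) ω)) ∧
        (∀ᵐ ω ∂P,
          condDistrib (X (t + 1))
            (fun ω' => ((fun i : Fin (t + 1) => X i ω'), B (t + 1) ω')) P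
            ((fun i : Fin (t + 1) => X i ω), B (t + 1) ω)
          = if B (t + 1) ω then unifOn Xset
            else unifOn (adaSet Xset f R (fun i : Fin (t + 1) => X i ω)
                  (X (ihat ω) ω)))

/-- The true ranking loss `L(r) = P(r(X,X') ≠ r_f(X,X'))` for `X, X'` independent uniform on
`Xset`. -/
def trueLoss {d : ℕ} (Xset : Set (Euc d)) (f : Euc d → ℝ) (r : Euc d → Euc d → ℝ) : ℝ :=
  (((unifOn Xset).prod (unifOn Xset))
    {q : Euc d × Euc d | r q.1 q.2 ≠ Real.sign (f q.1 - f q.2)}).toReal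

/-- The random quantity whose expectation is the Rademacher average of the class `R` given the
ranking rule induced by `f`. -/
def radSupTerm {d : ℕ} (f : Euc d → ℝ) (R : Set (Euc d → Euc d → ℝ)) (n : ℕ)
    (x : Fin n → Euc d) (ε : Fin (n / 2) → Bool) : ℝ :=
  sSup {v : ℝ | ∃ r ∈ R, v =
    (1 / ((n / 2 : ℕ) : ℝ)) * |∑ i : Fin (n / 2),
      (if ε i then (1 : ℝ) else -1) *
      (if r (x ⟨i.1, by have := i.isLt; omega⟩) (x ⟨n / 2 + i.1, by have := i.isLt; omega⟩)
          ≠ Real.sign (f (x ⟨i.1, by have := i.isLt; omega⟩)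
            - f (x ⟨n / 2 + i.1, by have := i.isLt; omega⟩)) then (1 : ℝ) else 0)|}

/-- Expected Rademacher average `E[R_n(R)]` of the class `R` given `r_f`, where the sample is
i.i.d. uniform on `Xset` and the signs are i.i.d. Rademacher. -/
def expRad {d : ℕ} (Xset : Set (Euc d)) (f : Euc d → ℝ)
    (R : Set (Euc d → Euc d → ℝ)) (n : ℕ) : ℝ :=
  ∫ x, (∫ ε, radSupTerm f R n x ε ∂(Measure.pi fun _ : Fin (n / 2) => bern (1 / 2)))
    ∂(Measure.pi fun _ : Fin n => unifOn Xset)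

/-- Index type for the non-constant monomials of degree at most `k` in `d` variables. -/
def MonIdx (d k : ℕ) :=
  {a : Fin d → Fin (k + 1) // 1 ≤ ∑ i, (a i : ℕ) ∧ ∑ i, (a i : ℕ) ≤ k}

instance (d k : ℕ) : Fintype (MonIdx d k) := by unfold MonIdx; infer_instance

/-- The monomial feature `x ↦ ∏ i, x i ^ a i`, a coordinate of the polynomial feature map
`Φ_k`. -/
def monFeature {d k : ℕ} (a : MonIdx d k) (x : Fin d → ℝ) : ℝ :=
  ∏ i, x i ^ ((a.1 i : ℕ))

end

noncomputable section PolyRankAux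

namespace PolyRankAux

open Finset

variable {d k t : ℕ}

/-- Embed a monomial index as a finitely supported exponent vector. -/
def toF (a : MonIdx d k) : Fin d →₀ ℕ :=
  Finsupp.equivFunOnFinite.symm fun i => (a.1 i : ℕ)

lemma toF_apply (a : MonIdx d k) (i : Fin d) : toF a i = (a.1 i : ℕ) := rfl

lemma toF_injective : Function.Injective (toF (d := d) (k := k)) := by
  intro a b h
  apply Subtype.ext; funext i
  have h' : (a.1 i : ℕ) = (b.1 i : ℕ) := by
    have := congrArg (fun m : Fin d →₀ ℕ => m i) h
    simpa [toF_apply] using this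
  exact Fin.ext h'

lemma monFeature_eq (a : MonIdx d k) (x : Fin d → ℝ) :
    monFeature a x = ∏ i, x i ^ (toF a i) := rfl

lemma toF_ne_zero (a : MonIdx d k) : toF a ≠ 0 := by
  intro h
  have hs : ∑ i, (toF a) i = 0 := by rw [h]; simp
  have h1 : 1 ≤ ∑ i, ((a.1 i : ℕ)) := a.2.1
  simp only [toF_apply] at hs
  omega

/-- Decomposition of the evaluation of a polynomial of total degree at most `k`. -/
lemma eval_decomp (P : MvPolynomial (Fin d) ℝ) (hP : P.totalDegree ≤ k) (x : Fin d → ℝ) :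
    MvPolynomial.eval x P
      = P.coeff 0 + ∑ a : MonIdx d k, P.coeff (toF a) * monFeature a x := by
  classical
  have hsub : P.support ⊆ insert 0 (Finset.univ.image (toF (d := d) (k := k))) := by
    intro m hm
    by_cases hm0 : m = 0
    · simp [hm0]
    · have hdeg : (m.sum fun _ e => e) ≤ k := (MvPolynomial.le_totalDegree hm).trans hP
      have hdeg' : ∑ i, m i ≤ k := by
        rwa [Finsupp.sum_fintype _ _ (fun _ => rfl)] at hdeg
      have hle : ∀ i, m i ≤ ∑ j, m j := fun i =>
        Finset.single_le_sum (f := fun j => m j) (fun _ _ => Nat.zero_le _)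
          (Finset.mem_univ i)
      have hpos : 1 ≤ ∑ i, m i := by
        by_contra hc
        push_neg at hc
        refine hm0 (Finsupp.ext fun i => ?_)
        have := hle i
        simp only [Finsupp.coe_zero, Pi.zero_apply]
        omega
      refine Finset.mem_insert_of_mem (Finset.mem_image.2 ⟨⟨fun i => ⟨m i, by
        have := hle i; omega⟩, ?_, ?_⟩, Finset.mem_univ _, ?_⟩)
      · simpa using hpos
      · simpa using hdeg'
      · exact Finsupp.ext fun i => rfl
  have h0T : (0 : Fin d →₀ ℕ) ∉ Finset.univ.image (toF (d := d) (k := k)) := by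
    simp only [Finset.mem_image, Finset.mem_univ, true_and, not_exists]
    exact fun a h => toF_ne_zero a h
  rw [MvPolynomial.eval_eq' x P,
    Finset.sum_subset hsub (fun m _ hm => by
      rw [MvPolynomial.notMem_support_iff.1 hm, zero_mul]),
    Finset.sum_insert h0T, Finset.sum_image (fun a _ b _ h => toF_injective h)]
  simp [monFeature_eq]

lemma eval_sum_monomial (c : MonIdx d k → ℝ) (x : Fin d → ℝ) :
    MvPolynomial.eval x (∑ a : MonIdx d k, MvPolynomial.monomial (toF a) (c a))
      = ∑ a : MonIdx d k, c a * monFeature a x := by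
  rw [map_sum]
  refine Finset.sum_congr rfl fun a _ => ?_
  rw [MvPolynomial.eval_monomial, monFeature_eq,
    Finsupp.prod_fintype _ _ (fun _ => pow_zero _)]

lemma totalDegree_sum_monomial (c : MonIdx d k → ℝ) :
    (∑ a : MonIdx d k, MvPolynomial.monomial (toF a) (c a)).totalDegree ≤ k := by
  refine (MvPolynomial.totalDegree_finset_sum _ _).trans (Finset.sup_le fun a _ => ?_)
  refine (MvPolynomial.totalDegree_monomial_le _ _).trans ?_
  rw [Finsupp.sum_fintype _ _ (fun _ => rfl)]
  simpa [toF_apply] using a.2.2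

end PolyRankAux

end PolyRankAux

/-- **Corollary 17 of the paper**: a sample with pairwise distinct values can be perfectly
ranked by a polynomial of total degree at most `k` iff the associated polyhedral set
`{λ : M λᵀ = 0, ⟨1,λ⟩ = 1, λ ⪰ 0}` is empty. -/
theorem polynomial_ranking_polyhedron
    {d k t : ℕ} (hk : 1 ≤ k) {Xset : Set (Fin d → ℝ)} (f : (Fin d → ℝ) → ℝ)
    (X : Fin (t + 1) → Fin d → ℝ) (hX : ∀ i, X i ∈ Xset)
    (hord : StrictMono fun i => f (X i)) :
    (∃ P : MvPolynomial (Fin d) ℝ, P.totalDegree ≤ k ∧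
      ∀ i j : Fin (t + 1),
        Real.sign (MvPolynomial.eval (X i) P - MvPolynomial.eval (X j) P)
          = Real.sign (f (X i) - f (X j)))
    ↔ ¬ ∃ lam : Fin t → ℝ,
        (∀ a : MonIdx d k,
          ∑ i : Fin t,
            lam i * (monFeature a (X i.succ) - monFeature a (X i.castSucc)) = 0) ∧
        (∑ i : Fin t, lam i = 1) ∧ (∀ i, 0 ≤ lam i) := by
  classical
  open PolyRankAux in
  set v : Fin t → (MonIdx d k → ℝ) :=
    fun i a => monFeature a (X i.succ) - monFeature a (X i.castSucc) with hv
  constructor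
  · rintro ⟨P, hPd, hPs⟩ ⟨lam, hlam0, hlam1, hlamnn⟩
    -- consecutive differences of evaluations are positive
    have hD : ∀ i : Fin t, 0 < MvPolynomial.eval (X i.succ) P
        - MvPolynomial.eval (X i.castSucc) P := by
      intro i
      have hf : 0 < f (X i.succ) - f (X i.castSucc) :=
        sub_pos.2 (hord (Fin.castSucc_lt_succ (i := i)))
      have hsg : Real.sign (MvPolynomial.eval (X i.succ) P
          - MvPolynomial.eval (X i.castSucc) P) = 1 := by
        rw [hPs i.succ i.castSucc, Real.sign_of_pos hf]
      rcases lt_trichotomy (MvPolynomial.eval (X i.succ) P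
          - MvPolynomial.eval (X i.castSucc) P) 0 with h | h | h
      · rw [Real.sign_of_neg h] at hsg; norm_num at hsg
      · rw [h, Real.sign_zero] at hsg; norm_num at hsg
      · exact h
    have hDeq : ∀ i : Fin t, MvPolynomial.eval (X i.succ) P
        - MvPolynomial.eval (X i.castSucc) P
        = ∑ a : MonIdx d k, P.coeff (toF a) * v i a := by
      intro i
      rw [eval_decomp P hPd, eval_decomp P hPd, add_sub_add_left_eq_sub,
        ← Finset.sum_sub_distrib]
      exact Finset.sum_congr rfl fun a _ => by simp only [hv]; ring
    have hzero : ∑ i : Fin t, lam i * (MvPolynomial.eval (X i.succ) P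
        - MvPolynomial.eval (X i.castSucc) P) = 0 := by
      simp only [hDeq, Finset.mul_sum]
      rw [Finset.sum_comm]
      refine Finset.sum_eq_zero fun a _ => ?_
      have h1 : ∑ i : Fin t, lam i * v i a = 0 := hlam0 a
      calc ∑ i : Fin t, lam i * (MvPolynomial.coeff (toF a) P * v i a)
          = MvPolynomial.coeff (toF a) P * ∑ i : Fin t, lam i * v i a := by
            rw [Finset.mul_sum]; exact Finset.sum_congr rfl fun i _ => by ring
        _ = 0 := by rw [h1, mul_zero]
    have hpos : 0 < ∑ i : Fin t, lam i * (MvPolynomial.eval (X i.succ) P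
        - MvPolynomial.eval (X i.castSucc) P) := by
      obtain ⟨i0, hi0⟩ : ∃ i : Fin t, 0 < lam i := by
        by_contra hc
        push_neg at hc
        have : ∀ i : Fin t, lam i = 0 := fun i => le_antisymm (hc i) (hlamnn i)
        simp [this] at hlam1
      refine Finset.sum_pos' (fun i _ => mul_nonneg (hlamnn i) (hD i).le)
        ⟨i0, Finset.mem_univ i0, mul_pos hi0 (hD i0)⟩
    rw [hzero] at hpos
    exact lt_irrefl 0 hpos
  · intro hno
    -- the image of the standard simplex
    set L : (Fin t → ℝ) →ₗ[ℝ] (MonIdx d k → ℝ) :=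
      { toFun := fun lam => ∑ i : Fin t, lam i • v i
        map_add' := by
          intro a b
          simp only [Pi.add_apply, add_smul]
          rw [Finset.sum_add_distrib]
        map_smul' := by
          intro r a
          simp only [Pi.smul_apply, smul_eq_mul, RingHom.id_apply, Finset.smul_sum, smul_smul] } with hL
    set S : Set (MonIdx d k → ℝ) := L '' stdSimplex ℝ (Fin t) with hS
    have h0S : (0 : MonIdx d k → ℝ) ∉ S := by
      rintro ⟨lam, ⟨hnn, hsum⟩, heq⟩
      refine hno ⟨lam, fun a => ?_, hsum, hnn⟩
      have := congrFun heq a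
      simp only [hL, LinearMap.coe_mk, AddHom.coe_mk, Finset.sum_apply, Pi.smul_apply,
        smul_eq_mul, Pi.zero_apply] at this
      simpa [hv] using this
    have hconv : Convex ℝ S := (convex_stdSimplex ℝ (Fin t)).linear_image L
    have hcl : IsClosed S := by
      refine ((isCompact_stdSimplex ℝ (Fin t)).image ?_).isClosed
      have : Continuous fun lam : Fin t → ℝ => ∑ i : Fin t, lam i • v i :=
        continuous_finset_sum Finset.univ fun i _ =>
          (continuous_apply i).smul continuous_const
      exact this
    obtain ⟨φ, u, hu0, hSu⟩ := geometric_hahn_banach_point_closed hconv hcl h0S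
    rw [map_zero] at hu0
    have hvS : ∀ i : Fin t, v i ∈ S := by
      intro i
      refine ⟨Pi.single i 1, ⟨fun j => ?_, by simp⟩, ?_⟩
      · rcases eq_or_ne j i with h | h <;> simp [Pi.single_apply, h]
      · simp only [hL, LinearMap.coe_mk, AddHom.coe_mk]
        rw [Finset.sum_eq_single i (fun j _ hj => by simp [Pi.single_apply, hj])
          (fun h => absurd (Finset.mem_univ i) h)]
        simp
    have hφv : ∀ i : Fin t, 0 < φ (v i) := fun i => hu0.trans (hSu _ (hvS i))
    -- build the polynomial from the separating functional
    set c : MonIdx d k → ℝ := fun a => φ (Pi.single a 1) with hc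
    set P : MvPolynomial (Fin d) ℝ :=
      ∑ a : MonIdx d k, MvPolynomial.monomial (toF a) (c a) with hP
    have hEval : ∀ x, MvPolynomial.eval x P = ∑ a : MonIdx d k, c a * monFeature a x :=
      fun x => eval_sum_monomial c x
    have hφ : ∀ y : MonIdx d k → ℝ, φ y = ∑ a : MonIdx d k, y a * c a := by
      intro y
      have hy : y = ∑ a : MonIdx d k, y a • (Pi.single a 1 : MonIdx d k → ℝ) := by
        funext b
        simp [Pi.single_apply]
      conv_lhs => rw [hy]
      rw [map_sum]
      exact Finset.sum_congr rfl fun a _ => by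
        rw [φ.map_smul, smul_eq_mul, hc]
    have hDpos : ∀ i : Fin t, MvPolynomial.eval (X i.castSucc) P
        < MvPolynomial.eval (X i.succ) P := by
      intro i
      have : MvPolynomial.eval (X i.succ) P - MvPolynomial.eval (X i.castSucc) P
          = φ (v i) := by
        rw [hEval, hEval, hφ (v i), ← Finset.sum_sub_distrib]
        exact Finset.sum_congr rfl fun a _ => by simp [hv]; ring
      linarith [hφv i, this]
    have hmono : StrictMono fun i : Fin (t + 1) => MvPolynomial.eval (X i) P :=
      Fin.strictMono_iff_lt_succ.2 hDpos
    refine ⟨P, totalDegree_sum_monomial c, fun i j => ?_⟩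
    rcases lt_trichotomy i j with h | h | h
    · rw [Real.sign_of_neg (sub_neg.2 (hmono h)), Real.sign_of_neg (sub_neg.2 (hord h))]
    · rw [h, sub_self, sub_self]
    · rw [Real.sign_of_pos (sub_pos.2 (hmono h)), Real.sign_of_pos (sub_pos.2 (hord h))]
end

section
/- Let d = 1, let X ⊂ ℝ be a compact convex set, let k ≥ 1, and let (X_1, f(X_1)), …, (X_{t+1}, f(X_{t+1})) be a sample with pairwise distinct values, ordered so that f(X_{(1)}) < ⋯ < f(X_{(t+1)}). Then there exists a continuous function h : X → ℝ with sgn(h(X_i)−h(X_j)) = sgn(f(X_i)−f(X_j)) for all i, j and such that every set {x ∈ X : h(x) ≥ h(x')}, x' ∈ X, is a union of at most k convex sets, if and only if there exists a sequence of classifiers h_1, …, h_{t+1} of the form h_i(x) = Σ_{m=1}^k 1{l_{i,m} ≤ x ≤ u_{i,m}} satisfying (1) h_i(X_{(j)}) = 1{j ≥ i} for all i, j ∈ {1,…,t+1}, and (2) h_1 ≥ h_2 ≥ ⋯ ≥ h_{t+1} pointwise. -/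
open MeasureTheory ProbabilityTheory Set
open scoped ENNReal NNReal BigOperators

section OverlayAux
open Set Finset Metric


/-- Union of a convex set `J` with convex sets each meeting `J` is convex (in ℝ). -/
lemma convex_union_of_meet {ι : Sort*} (J : Set ℝ) (hJ : Convex ℝ J)
    (S : ι → Set ℝ) (hS : ∀ i, Convex ℝ (S i)) (hmeet : ∀ i, (S i ∩ J).Nonempty) :
    Convex ℝ (J ∪ ⋃ i, S i) := by
  rw [convex_iff_ordConnected]
  constructor
  intro x hx y hy z hz
  -- package : for any endpoint e in the union, get T convex ⊆ union, e ∈ T, w ∈ T ∩ J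
  have pack : ∀ e ∈ J ∪ ⋃ i, S i, ∃ T : Set ℝ, Convex ℝ T ∧ T ⊆ J ∪ ⋃ i, S i ∧ e ∈ T ∧
      ∃ w, w ∈ T ∩ J := by
    intro e he
    rcases he with he | he
    · exact ⟨J, hJ, subset_union_left, he, e, he, he⟩
    · rcases mem_iUnion.1 he with ⟨i, hi⟩
      rcases hmeet i with ⟨w, hw⟩
      exact ⟨S i, hS i, (subset_iUnion S i).trans subset_union_right, hi, w, hw⟩
  obtain ⟨Tx, hTx, hTxU, hxT, wx, hwx⟩ := pack x hx
  obtain ⟨Ty, hTy, hTyU, hyT, wy, hwy⟩ := pack y hy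
  have hTx' := hTx.ordConnected
  have hTy' := hTy.ordConnected
  have hJ' := hJ.ordConnected
  rcases le_or_gt wx z with h1 | h1
  · rcases le_or_gt z wy with h2 | h2
    · exact Or.inl (hJ'.out hwx.2 hwy.2 ⟨h1, h2⟩)
    · exact hTyU (hTy'.out hwy.1 hyT ⟨h2.le, hz.2⟩)
  · exact hTxU (hTx'.out hxT hwx.1 ⟨hz.1, h1.le⟩)


/-- hull predicate for high set G at point x -/
def hullPred {n : ℕ} (X : Fin n → ℝ) (G : Fin n → Prop) (x : ℝ) : Prop :=
  ∃ a b, G a ∧ G b ∧ x ∈ Set.uIcc (X a) (X b) ∧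
    ∀ p, ¬ G p → X p ∉ Set.uIcc (X a) (X b)

lemma icc_overlap {a b c d x : ℝ} (h1 : x ∈ Set.Icc a b) (h2 : x ∈ Set.Icc c d) :
    a ∈ Set.Icc c d ∨ c ∈ Set.Icc a b := by
  rcases le_total a c with h | h
  · exact Or.inr ⟨h, h2.1.trans h1.2⟩
  · exact Or.inl ⟨h, h1.1.trans h2.2⟩

open scoped Classical in
lemma exists_lu {n k : ℕ} (X : Fin n → ℝ) (hXinj : Function.Injective X)
    (G : Fin n → Prop) (C : Fin k → Set ℝ) (hC : ∀ m, Convex ℝ (C m))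
    (hmem : ∀ j, G j → X j ∈ ⋃ m, C m) (hlow : ∀ p, ¬ G p → X p ∉ ⋃ m, C m) :
    ∃ l u : Fin k → ℝ, ∀ x : ℝ,
      (∑ m : Fin k, if l m ≤ x ∧ x ≤ u m then (1 : ℝ) else 0)
        = if hullPred X G x then 1 else 0 := by
  classical
  set S := {j : Fin n // G j} with hS
  let r : S → S → Prop := fun a b => ∀ p, ¬ G p → X p ∉ Set.uIcc (X a.1) (X b.1)
  have hrefl : ∀ a : S, r a a := by
    intro a p hp hmem'
    rw [Set.uIcc_self, Set.mem_singleton_iff] at hmem'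
    exact hp (hXinj hmem' ▸ a.2)
  have hsymm : ∀ a b : S, r a b → r b a := by
    intro a b h p hp
    rw [Set.uIcc_comm]; exact h p hp
  have htrans : ∀ a b c : S, r a b → r b c → r a c := by
    intro a b c h1 h2 p hp hmem'
    rcases Set.uIcc_subset_uIcc_union_uIcc (b := X b.1) hmem' with h | h
    · exact h1 p hp h
    · exact h2 p hp h
  let sd : Setoid S := ⟨r, hrefl, fun {a b} => hsymm a b, fun {a b c} => htrans a b c⟩
  let Q := Quotient sd
  let cls : Q → Set ℝ := fun q => (fun j : S => X j.1) '' {j : S | Quotient.mk sd j = q}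
  have hclsne : ∀ q : Q, (cls q).Nonempty :=
    fun q => ⟨X q.out.1, ⟨q.out, Quotient.out_eq q, rfl⟩⟩
  have hclsfin : ∀ q : Q, (cls q).Finite := fun q => Set.toFinite _
  let hull : Q → Set ℝ := fun q => Set.Icc (sInf (cls q)) (sSup (cls q))
  have hclsmem : ∀ (q : Q) (j : S), Quotient.mk sd j = q → X j.1 ∈ hull q := by
    intro q j hj
    have hm : X j.1 ∈ cls q := ⟨j, hj, rfl⟩
    exact ⟨csInf_le (hclsfin q).bddBelow hm, le_csSup (hclsfin q).bddAbove hm⟩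
  have hhull : ∀ q : Q, ∃ ja jb : S, Quotient.mk sd ja = q ∧ Quotient.mk sd jb = q ∧
      hull q = Set.uIcc (X ja.1) (X jb.1) := by
    intro q
    obtain ⟨ja, hja, hXja⟩ := (hclsne q).csInf_mem (hclsfin q)
    obtain ⟨jb, hjb, hXjb⟩ := (hclsne q).csSup_mem (hclsfin q)
    refine ⟨ja, jb, hja, hjb, ?_⟩
    have hXja' : X ja.1 = sInf (cls q) := hXja
    have hXjb' : X jb.1 = sSup (cls q) := hXjb
    have h1 := hclsmem q ja hja
    rw [Set.uIcc_of_le (by rw [hXja', hXjb']; exact h1.1.trans h1.2), hXja', hXjb']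
  -- a high point inside a hull belongs to the class
  have keymem : ∀ (q : Q) (j : S), X j.1 ∈ hull q → Quotient.mk sd j = q := by
    intro q j hj
    obtain ⟨ja, jb, hja, hjb, hequ⟩ := hhull q
    rw [hequ] at hj
    have hrab : r ja jb := Quotient.exact (hja.trans hjb.symm)
    have hrj : r ja j := by
      intro p hp hmem'
      exact hrab p hp (Set.uIcc_subset_uIcc Set.left_mem_uIcc hj hmem')
    exact (Quotient.sound (hsymm _ _ hrj)).trans hja
  have hoverlap : ∀ (q q' : Q) (x : ℝ), x ∈ hull q → x ∈ hull q' → q = q' := by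
    intro q q' x hx hx'
    obtain ⟨ja, _, hja, _, _⟩ := hhull q
    obtain ⟨ja', _, hja', _, _⟩ := hhull q'
    rcases icc_overlap hx hx' with h | h
    · -- sInf (cls q) ∈ hull q'
      obtain ⟨jc, hjc, hXjc⟩ := (hclsne q).csInf_mem (hclsfin q)
      have hXjc' : X jc.1 = sInf (cls q) := hXjc
      rw [← hXjc'] at h
      exact (keymem q' jc h).symm.trans hjc |>.symm
    · obtain ⟨jc, hjc, hXjc⟩ := (hclsne q').csInf_mem (hclsfin q')
      have hXjc' : X jc.1 = sInf (cls q') := hXjc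
      rw [← hXjc'] at h
      exact (keymem q jc h).symm.trans hjc
  have hullpred : ∀ (q : Q) (x : ℝ), x ∈ hull q → hullPred X G x := by
    intro q x hx
    obtain ⟨ja, jb, hja, hjb, hequ⟩ := hhull q
    exact ⟨ja.1, jb.1, ja.2, jb.2, hequ ▸ hx, Quotient.exact (hja.trans hjb.symm)⟩
  have hφ : ∀ q : Q, ∃ m : Fin k, X q.out.1 ∈ C m :=
    fun q => Set.mem_iUnion.1 (hmem q.out.1 q.out.2)
  let φ : Q → Fin k := fun q => (hφ q).choose
  have hφmem : ∀ q : Q, X q.out.1 ∈ C (φ q) := fun q => (hφ q).choose_spec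
  have hrelC : ∀ (a b : S) (m : Fin k), X a.1 ∈ C m → X b.1 ∈ C m → r a b := by
    intro a b m ha hb p hp hmem'
    have : X p ∈ C m := (hC m).ordConnected.uIcc_subset ha hb hmem'
    exact hlow p hp (Set.mem_iUnion.2 ⟨m, this⟩)
  have hφinj : Function.Injective φ := by
    intro q q' hqq
    have h1 := hφmem q
    have h2 := hφmem q'
    rw [hqq] at h1
    have : Quotient.mk sd q.out = Quotient.mk sd q'.out := Quotient.sound (hrelC _ _ _ h1 h2)
    rwa [Quotient.out_eq, Quotient.out_eq] at this
  let l : Fin k → ℝ := fun m => if hq : ∃ q : Q, φ q = m then sInf (cls hq.choose) else 1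
  let u : Fin k → ℝ := fun m => if hq : ∃ q : Q, φ q = m then sSup (cls hq.choose) else 0
  have hcond : ∀ (m : Fin k) (x : ℝ), (l m ≤ x ∧ x ≤ u m) ↔ ∃ q : Q, φ q = m ∧ x ∈ hull q := by
    intro m x
    constructor
    · rintro ⟨h1, h2⟩
      by_cases hq : ∃ q : Q, φ q = m
      · refine ⟨hq.choose, hq.choose_spec, ?_⟩
        simp only [l, dif_pos hq] at h1
        simp only [u, dif_pos hq] at h2
        exact ⟨h1, h2⟩
      · simp only [l, dif_neg hq] at h1
        simp only [u, dif_neg hq] at h2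
        linarith
    · rintro ⟨q, hqm, hx⟩
      have hq : ∃ q : Q, φ q = m := ⟨q, hqm⟩
      have : hq.choose = q := hφinj (hq.choose_spec.trans hqm.symm)
      constructor
      · simp only [l, dif_pos hq, this]; exact hx.1
      · simp only [u, dif_pos hq, this]; exact hx.2
  refine ⟨l, u, fun x => ?_⟩
  by_cases hx : hullPred X G x
  · rw [if_pos hx]
    obtain ⟨a, b, hGa, hGb, hxab, hlowab⟩ := hx
    set sa : S := ⟨a, hGa⟩
    set sb : S := ⟨b, hGb⟩
    have hrab : r sa sb := fun p hp => hlowab p hp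
    set q0 : Q := Quotient.mk sd sa with hq0
    have hq0b : Quotient.mk sd sb = q0 := Quotient.sound (hsymm _ _ hrab)
    have hxq0 : x ∈ hull q0 := by
      have h1 := hclsmem q0 sa rfl
      have h2 := hclsmem q0 sb hq0b
      have hsub : Set.uIcc (X sa.1) (X sb.1) ⊆ Set.uIcc (sInf (cls q0)) (sSup (cls q0)) :=
        Set.uIcc_subset_uIcc (Set.mem_uIcc_of_le h1.1 h1.2) (Set.mem_uIcc_of_le h2.1 h2.2)
      have hx' := hsub hxab
      rwa [Set.uIcc_of_le (h1.1.trans h1.2)] at hx'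
    have key : ∀ m : Fin k, (l m ≤ x ∧ x ≤ u m) ↔ m = φ q0 := by
      intro m
      rw [hcond]
      constructor
      · rintro ⟨q, hqm, hxq⟩
        rw [← hqm, hoverlap q q0 x hxq hxq0]
      · rintro rfl
        exact ⟨q0, rfl, hxq0⟩
    calc (∑ m : Fin k, if l m ≤ x ∧ x ≤ u m then (1 : ℝ) else 0)
        = ∑ m : Fin k, if m = φ q0 then (1 : ℝ) else 0 := by
          refine Finset.sum_congr rfl fun m _ => ?_
          simp only [key m]
      _ = 1 := by rw [Finset.sum_ite_eq' Finset.univ (φ q0) (fun _ => (1:ℝ))]; simp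
  · rw [if_neg hx]
    refine Finset.sum_eq_zero fun m _ => ?_
    rw [if_neg]
    intro hc
    obtain ⟨q, _, hxq⟩ := (hcond m x).1 hc
    exact hx (hullpred q x hxq)

lemma forward_dir {t k : ℕ} {Xset : Set ℝ} (f : ℝ → ℝ)
    (X : Fin (t + 1) → ℝ) (hX : ∀ i, X i ∈ Xset)
    (hord : StrictMono fun i => f (X i)) (h : ℝ → ℝ)
    (hsign : ∀ i j : Fin (t + 1),
      Real.sign (h (X i) - h (X j)) = Real.sign (f (X i) - f (X j)))
    (hlev : ∀ x' ∈ Xset, ∃ C : Fin k → Set ℝ, (∀ m, Convex ℝ (C m)) ∧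
        {x ∈ Xset | h x' ≤ h x} = ⋃ m, C m) :
    ∃ l u : Fin (t + 1) → Fin k → ℝ,
        (∀ i j : Fin (t + 1),
          (∑ m : Fin k, if l i m ≤ X j ∧ X j ≤ u i m then (1 : ℝ) else 0)
            = if i ≤ j then 1 else 0) ∧
        (∀ i j : Fin (t + 1), i ≤ j → ∀ x : ℝ,
          (∑ m : Fin k, if l j m ≤ x ∧ x ≤ u j m then (1 : ℝ) else 0)
            ≤ ∑ m : Fin k, if l i m ≤ x ∧ x ≤ u i m then (1 : ℝ) else 0) := by
  classical
  have hXinj : Function.Injective X := fun a b hab => hord.injective (congrArg f hab)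
  have hlt : ∀ i j : Fin (t + 1), i < j → h (X i) < h (X j) := by
    intro i j hij
    have hf : f (X i) - f (X j) < 0 := sub_neg.2 (hord hij)
    have hs := hsign i j
    rw [Real.sign_of_neg hf] at hs
    rcases lt_trichotomy (h (X i) - h (X j)) 0 with hc | hc | hc
    · linarith
    · rw [hc, Real.sign_zero] at hs; norm_num at hs
    · rw [Real.sign_of_pos hc] at hs; norm_num at hs
  have hle : ∀ i j : Fin (t + 1), i ≤ j → h (X i) ≤ h (X j) := by
    intro i j hij
    rcases eq_or_lt_of_le hij with rfl | hij
    · exact le_rfl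
    · exact (hlt i j hij).le
  have key : ∀ i : Fin (t + 1), ∃ l u : Fin k → ℝ, ∀ x : ℝ,
      (∑ m : Fin k, if l m ≤ x ∧ x ≤ u m then (1 : ℝ) else 0)
        = if hullPred X (fun j => i ≤ j) x then 1 else 0 := by
    intro i
    obtain ⟨C, hC, hCeq⟩ := hlev (X i) (hX i)
    refine exists_lu X hXinj (fun j => i ≤ j) C hC ?_ ?_
    · intro j hij
      rw [← hCeq]
      exact ⟨hX j, hle i j hij⟩
    · intro p hp
      rw [← hCeq]
      rintro ⟨-, hhp⟩
      exact absurd (hlt p i (lt_of_not_ge hp)) (not_lt.2 hhp)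
  choose l u hlu using key
  have hchar : ∀ (i j : Fin (t + 1)), hullPred X (fun j' => i ≤ j') (X j) ↔ i ≤ j := by
    intro i j
    constructor
    · rintro ⟨a, b, hGa, hGb, hmem', hlow'⟩
      by_contra hij
      exact hlow' j hij hmem'
    · intro hij
      refine ⟨j, j, hij, hij, by rw [Set.uIcc_self]; exact rfl, ?_⟩
      intro p hp hm
      rw [Set.uIcc_self, Set.mem_singleton_iff] at hm
      exact hp (hXinj hm ▸ hij)
  have hmono : ∀ (i j : Fin (t + 1)), i ≤ j → ∀ x : ℝ,
      hullPred X (fun j' => j ≤ j') x → hullPred X (fun j' => i ≤ j') x := by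
    rintro i j hij x ⟨a, b, hGa, hGb, hmem', hlow'⟩
    exact ⟨a, b, hij.trans hGa, hij.trans hGb, hmem',
      fun p hp => hlow' p (fun hjp => hp (hij.trans hjp))⟩
  refine ⟨l, u, ?_, ?_⟩
  · intro i j
    rw [hlu i (X j)]
    by_cases hij : i ≤ j
    · rw [if_pos ((hchar i j).2 hij), if_pos hij]
    · rw [if_neg (fun hc => hij ((hchar i j).1 hc)), if_neg hij]
  · intro i j hij x
    rw [hlu i x, hlu j x]
    by_cases hj : hullPred X (fun j' => j ≤ j') x
    · rw [if_pos hj, if_pos (hmono i j hij x hj)]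
    · rw [if_neg hj]
      split <;> norm_num

lemma backward_dir {t k : ℕ} {Xset : Set ℝ} (hXconv : Convex ℝ Xset)
    (f : ℝ → ℝ) (X : Fin (t + 1) → ℝ) (hX : ∀ i, X i ∈ Xset)
    (hord : StrictMono fun i => f (X i))
    (l u : Fin (t + 1) → Fin k → ℝ)
    (hlu1 : ∀ i j : Fin (t + 1),
      (∑ m : Fin k, if l i m ≤ X j ∧ X j ≤ u i m then (1 : ℝ) else 0)
        = if i ≤ j then 1 else 0)
    (hlu2 : ∀ i j : Fin (t + 1), i ≤ j → ∀ x : ℝ,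
      (∑ m : Fin k, if l j m ≤ x ∧ x ≤ u j m then (1 : ℝ) else 0)
        ≤ ∑ m : Fin k, if l i m ≤ x ∧ x ≤ u i m then (1 : ℝ) else 0) :
    ∃ h : ℝ → ℝ, ContinuousOn h Xset ∧
      (∀ i j : Fin (t + 1), Real.sign (h (X i) - h (X j)) = Real.sign (f (X i) - f (X j))) ∧
      (∀ x' ∈ Xset, ∃ C : Fin k → Set ℝ, (∀ m, Convex ℝ (C m)) ∧
        {x ∈ Xset | h x' ≤ h x} = ⋃ m, C m) := by
  classical
  set U : Fin (t + 1) → Set ℝ := fun i => ⋃ m, Set.Icc (l i m) (u i m) with hU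
  -- basic sum facts
  have sum_ge_one : ∀ (i : Fin (t + 1)) (x : ℝ), x ∈ U i →
      (1 : ℝ) ≤ ∑ m : Fin k, if l i m ≤ x ∧ x ≤ u i m then (1 : ℝ) else 0 := by
    intro i x hx
    obtain ⟨m, hm⟩ := Set.mem_iUnion.1 hx
    calc (1 : ℝ) = if l i m ≤ x ∧ x ≤ u i m then (1 : ℝ) else 0 := by
          rw [if_pos ⟨hm.1, hm.2⟩]
      _ ≤ _ := Finset.single_le_sum (f := fun m => if l i m ≤ x ∧ x ≤ u i m then (1 : ℝ) else 0)
          (fun m _ => by split <;> norm_num) (Finset.mem_univ m)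
  have one_le_mem : ∀ (i : Fin (t + 1)) (x : ℝ),
      (1 : ℝ) ≤ (∑ m : Fin k, if l i m ≤ x ∧ x ≤ u i m then (1 : ℝ) else 0) → x ∈ U i := by
    intro i x hx
    by_contra hc
    have : (∑ m : Fin k, if l i m ≤ x ∧ x ≤ u i m then (1 : ℝ) else 0) = 0 := by
      refine Finset.sum_eq_zero fun m _ => ?_
      rw [if_neg]
      intro hm
      exact hc (Set.mem_iUnion.2 ⟨m, hm.1, hm.2⟩)
    rw [this] at hx; norm_num at hx
  have hmemU : ∀ i j : Fin (t + 1), i ≤ j → X j ∈ U i := by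
    intro i j hij
    exact one_le_mem i (X j) (by rw [hlu1 i j, if_pos hij])
  have hnotU : ∀ i j : Fin (t + 1), ¬ i ≤ j → X j ∉ U i := by
    intro i j hij hc
    have h1 := sum_ge_one i (X j) hc
    rw [hlu1 i j, if_neg hij] at h1
    norm_num at h1
  have hUsub : ∀ i0 i : Fin (t + 1), i0 ≤ i → U i ⊆ U i0 := by
    intro i0 i hi x hx
    exact one_le_mem i0 x ((sum_ge_one i x hx).trans (hlu2 i0 i hi x))
  have hUc : ∀ i, IsClosed (U i) := fun i => isClosed_iUnion_of_finite fun m => isClosed_Icc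
  have hUne : ∀ i, (U i).Nonempty := fun i => ⟨X i, hmemU i i le_rfl⟩
  -- the gap δ
  set S : Finset ℝ := insert 1 ((Finset.univ.filter
      (fun p : Fin (t + 1) × Fin (t + 1) => ¬ p.2 ≤ p.1)).image
      (fun p => Metric.infDist (X p.1) (U p.2))) with hSdef
  have hSne : S.Nonempty := ⟨1, Finset.mem_insert_self _ _⟩
  set D : ℝ := S.min' hSne with hD
  have hSpos : ∀ y ∈ S, 0 < y := by
    intro y hy
    rw [hSdef, Finset.mem_insert] at hy
    rcases hy with rfl | h1
    · norm_num
    · obtain ⟨p, hp, hpe⟩ := Finset.mem_image.1 h1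
      rw [Finset.mem_filter] at hp
      rw [← hpe]
      exact ((hUc p.2).notMem_iff_infDist_pos (hUne p.2)).1 (hnotU p.2 p.1 hp.2)
  have hDpos : 0 < D := hSpos _ (S.min'_mem hSne)
  have hDle : ∀ i j : Fin (t + 1), ¬ i ≤ j → D ≤ Metric.infDist (X j) (U i) := by
    intro i j hij
    refine Finset.min'_le _ _ ?_
    rw [hSdef]
    exact Finset.mem_insert_of_mem (Finset.mem_image.2 ⟨(j, i),
      Finset.mem_filter.2 ⟨Finset.mem_univ _, hij⟩, rfl⟩)
  set δ : ℝ := D / (t + 2) with hδ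
  have hδpos : 0 < δ := by positivity
  have hδkey : ∀ i j : Fin (t + 1), ¬ i ≤ j →
      δ * (t + 1) < Metric.infDist (X j) (U i) := by
    intro i j hij
    refine lt_of_lt_of_le ?_ (hDle i j hij)
    rw [hδ, div_mul_eq_mul_div, div_lt_iff₀ (by positivity)]
    nlinarith [hDpos]
  -- the function h
  have hune : (Finset.univ : Finset (Fin (t + 1))).Nonempty := Finset.univ_nonempty
  set h : ℝ → ℝ := fun x => Finset.univ.sup' hune
      (fun i : Fin (t + 1) => ((i : ℕ) : ℝ) + 1 - Metric.infDist x (U i) / δ) with hh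
  have hval : ∀ j : Fin (t + 1), h (X j) = ((j : ℕ) : ℝ) + 1 := by
    intro j
    rw [hh]
    apply le_antisymm
    · refine Finset.sup'_le _ _ fun i _ => ?_
      by_cases hij : i ≤ j
      · have h1 : (0:ℝ) ≤ Metric.infDist (X j) (U i) / δ :=
          div_nonneg Metric.infDist_nonneg hδpos.le
        have h2 : ((i : ℕ) : ℝ) ≤ ((j : ℕ) : ℝ) := by exact_mod_cast hij
        linarith
      · have h1 := hδkey i j hij
        have h2 : ((t : ℕ) : ℝ) + 1 < Metric.infDist (X j) (U i) / δ := by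
          rw [lt_div_iff₀ hδpos]; linarith [h1]
        have h3 : ((i : ℕ) : ℝ) ≤ t := by exact_mod_cast Nat.lt_succ_iff.1 i.isLt
        have h4 : (0:ℝ) ≤ ((j : ℕ) : ℝ) := Nat.cast_nonneg _
        linarith
    · have := Finset.le_sup' (f := fun i : Fin (t + 1) =>
        ((i : ℕ) : ℝ) + 1 - Metric.infDist (X j) (U i) / δ) (Finset.mem_univ j)
      rwa [Metric.infDist_zero_of_mem (hmemU j j le_rfl), zero_div, sub_zero] at this
  have hcont : Continuous h := by
    rw [hh]
    rw [continuous_iff_continuousAt]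
    intro x
    exact ContinuousAt.finset_sup'_apply hune fun i _ =>
      (continuous_const.sub ((Metric.continuous_infDist_pt (U i)).div_const δ)).continuousAt
  have hsign : ∀ i j : Fin (t + 1),
      Real.sign (h (X i) - h (X j)) = Real.sign (f (X i) - f (X j)) := by
    intro i j
    rcases lt_trichotomy i j with hij | rfl | hij
    · have h1 : h (X i) - h (X j) < 0 := by
        rw [hval i, hval j]
        have : ((i : ℕ) : ℝ) < ((j : ℕ) : ℝ) := by exact_mod_cast hij
        linarith
      rw [Real.sign_of_neg h1, Real.sign_of_neg (sub_neg.2 (hord hij))]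
    · rw [sub_self, sub_self]
    · have h1 : 0 < h (X i) - h (X j) := by
        rw [hval i, hval j]
        have : ((j : ℕ) : ℝ) < ((i : ℕ) : ℝ) := by exact_mod_cast hij
        linarith
      rw [Real.sign_of_pos h1, Real.sign_of_pos (sub_pos.2 (hord hij))]
  refine ⟨h, hcont.continuousOn, hsign, ?_⟩
  -- level sets
  intro x' hx'
  set c : ℝ := h x' with hc
  have hcle : c ≤ ((t : ℕ) : ℝ) + 1 := by
    rw [hc, hh]
    refine Finset.sup'_le _ _ fun i _ => ?_
    have h1 : (0:ℝ) ≤ Metric.infDist x' (U i) / δ := div_nonneg Metric.infDist_nonneg hδpos.le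
    have h3 : ((i : ℕ) : ℝ) ≤ t := by exact_mod_cast Nat.lt_succ_iff.1 i.isLt
    linarith
  set r : Fin (t + 1) → ℝ := fun i => δ * (((i : ℕ) : ℝ) + 1 - c) with hr
  have hex : ∃ n : ℕ, c ≤ (n : ℝ) + 1 := ⟨t, hcle⟩
  have hn0le : Nat.find hex ≤ t := Nat.find_min' hex hcle
  set i0 : Fin (t + 1) := ⟨Nat.find hex, by omega⟩ with hi0
  have hci0 : c ≤ ((i0 : ℕ) : ℝ) + 1 := Nat.find_spec hex
  have hri0 : 0 ≤ r i0 := mul_nonneg hδpos.le (by linarith)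
  have hrc : ∀ i : Fin (t + 1), 0 ≤ r i → c ≤ ((i : ℕ) : ℝ) + 1 := by
    intro i hri
    have hri' : (0:ℝ) ≤ δ * (((i : ℕ) : ℝ) + 1 - c) := hri
    by_contra hlt
    push_neg at hlt
    have : δ * (((i : ℕ) : ℝ) + 1 - c) < 0 := mul_neg_of_pos_of_neg hδpos (by linarith)
    linarith
  have hi0min : ∀ i : Fin (t + 1), 0 ≤ r i → i0 ≤ i := by
    intro i hri
    have := Nat.find_min' hex (hrc i hri)
    exact this
  have hVmem : ∀ x : ℝ, c ≤ h x ↔ ∃ i, Metric.infDist x (U i) ≤ r i := by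
    intro x
    rw [hh, Finset.le_sup'_iff]
    constructor
    · rintro ⟨i, -, hi⟩
      refine ⟨i, ?_⟩
      show Metric.infDist x (U i) ≤ δ * (((i : ℕ) : ℝ) + 1 - c)
      have h2 := (div_le_iff₀ hδpos).1 (by linarith : Metric.infDist x (U i) / δ ≤ ((i:ℕ):ℝ) + 1 - c)
      linarith [h2]
    · rintro ⟨i, hi⟩
      refine ⟨i, Finset.mem_univ i, ?_⟩
      have hi' : Metric.infDist x (U i) ≤ δ * (((i : ℕ) : ℝ) + 1 - c) := hi
      have h2 := (div_le_iff₀ hδpos).2 (by linarith : Metric.infDist x (U i) ≤ (((i:ℕ):ℝ) + 1 - c) * δ)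
      linarith [h2]
  have hpc1 : ∀ (i : Fin (t + 1)) (m : Fin k) (x : ℝ), l i m ≤ u i m → 0 ≤ r i →
      x ∈ Set.Icc (l i m - r i) (u i m + r i) → Metric.infDist x (U i) ≤ r i := by
    intro i m x hlum hri hx
    set y : ℝ := max (l i m) (min x (u i m)) with hy
    have hyU : y ∈ U i := Set.mem_iUnion.2 ⟨m, le_max_left _ _,
      max_le hlum (min_le_right _ _)⟩
    have hdist : dist x y ≤ r i := by
      rw [Real.dist_eq, abs_le]
      rcases le_total x (l i m) with h1 | h1
      · have : min x (u i m) = x := min_eq_left (h1.trans hlum)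
        rw [hy, this, max_eq_left h1]
        constructor <;> [linarith [hx.1]; linarith]
      · rcases le_total x (u i m) with h2 | h2
        · have : min x (u i m) = x := min_eq_left h2
          rw [hy, this, max_eq_right h1]
          constructor <;> linarith
        · have : min x (u i m) = u i m := min_eq_right h2
          rw [hy, this, max_eq_right hlum]
          constructor <;> [linarith; linarith [hx.2]]
    exact (Metric.infDist_le_dist_of_mem hyU).trans hdist
  have hpc2 : ∀ (i : Fin (t + 1)) (x : ℝ), Metric.infDist x (U i) ≤ r i →
      ∃ m : Fin k, l i m ≤ u i m ∧ x ∈ Set.Icc (l i m - r i) (u i m + r i) := by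
    intro i x hi
    obtain ⟨y, hyU, hyd⟩ := (hUc i).exists_infDist_eq_dist (hUne i) x
    obtain ⟨m, hym⟩ := Set.mem_iUnion.1 hyU
    refine ⟨m, hym.1.trans hym.2, ?_⟩
    rw [hyd, Real.dist_eq] at hi
    rw [abs_le] at hi
    exact ⟨by linarith [hym.1], by linarith [hym.2]⟩
  -- the convex pieces
  set P : Fin k → Sort _ := fun m' => {p : Fin (t + 1) × Fin k //
    0 ≤ r p.1 ∧ l p.1 p.2 ≤ u p.1 p.2 ∧ l i0 m' ≤ l p.1 p.2 ∧ l p.1 p.2 ≤ u i0 m'} with hP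
  set C : Fin k → Set ℝ := fun m' => Xset ∩
    ((if l i0 m' ≤ u i0 m' then Set.Icc (l i0 m' - r i0) (u i0 m' + r i0) else ∅) ∪
      ⋃ p : P m', Set.Icc (l p.1.1 p.1.2 - r p.1.1) (u p.1.1 p.1.2 + r p.1.1)) with hC
  refine ⟨C, ?_, ?_⟩
  · -- convexity
    intro m'
    simp only [hC]
    refine hXconv.inter ?_
    by_cases hv : l i0 m' ≤ u i0 m'
    · rw [if_pos hv]
      refine convex_union_of_meet _ (convex_Icc _ _) _ (fun p => convex_Icc _ _) ?_
      rintro ⟨p, hp1, hp2, hp3, hp4⟩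
      exact ⟨l p.1 p.2, ⟨sub_le_self _ hp1, hp2.trans (le_add_of_nonneg_right hp1)⟩,
        ⟨by linarith, by linarith⟩⟩
    · rw [if_neg hv]
      have hempty : ((∅ : Set ℝ) ∪ ⋃ p : P m',
          Set.Icc (l p.1.1 p.1.2 - r p.1.1) (u p.1.1 p.1.2 + r p.1.1)) = (∅ : Set ℝ) := by
        refine Set.eq_empty_of_forall_notMem fun x hx => ?_
        rcases hx with hx | hx
        · exact hx
        · obtain ⟨⟨p, hp1, hp2, hp3, hp4⟩, -⟩ := Set.mem_iUnion.1 hx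
          exact hv (hp3.trans hp4)
      rw [hempty]
      exact convex_empty
  · -- level set equality
    ext x
    simp only [Set.mem_setOf_eq, Set.mem_iUnion]
    constructor
    · rintro ⟨hxX, hch⟩
      obtain ⟨i, hi⟩ := (hVmem x).1 hch
      have hri : 0 ≤ r i := Metric.infDist_nonneg.trans hi
      obtain ⟨m, hlum, hxm⟩ := hpc2 i x hi
      have hlU : l i m ∈ U i0 := hUsub i0 i (hi0min i hri)
        (Set.mem_iUnion.2 ⟨m, le_rfl, hlum⟩)
      obtain ⟨m', hlm'⟩ := Set.mem_iUnion.1 hlU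
      refine ⟨m', ?_⟩
      simp only [hC]
      refine ⟨hxX, Or.inr ?_⟩
      exact Set.mem_iUnion.2 ⟨⟨(i, m), hri, hlum, hlm'.1, hlm'.2⟩, hxm⟩
    · rintro ⟨m', hm'⟩
      simp only [hC] at hm'
      refine ⟨hm'.1, ?_⟩
      rcases hm'.2 with hx | hx
      · by_cases hv : l i0 m' ≤ u i0 m'
        · rw [if_pos hv] at hx
          exact (hVmem x).2 ⟨i0, hpc1 i0 m' x hv hri0 hx⟩
        · rw [if_neg hv] at hx; exact absurd hx (Set.notMem_empty x)
      · obtain ⟨⟨p, hp1, hp2, hp3, hp4⟩, hxp⟩ := Set.mem_iUnion.1 hx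
        exact (hVmem x).2 ⟨p.1, hpc1 p.1 p.2 x hp2 hp1 hxp⟩

end OverlayAux

/-- **Overlaying classifiers** (Proposition 20 of the paper, dimension one): a sample with
pairwise distinct values can be perfectly ranked by a convex ranking rule of degree `k`
iff there exists a nested sequence of classifiers, each a union of `k` intervals, which
interpolates the sample. -/
theorem convex_ranking_overlaying_classifiers
    {t k : ℕ} (hk : 1 ≤ k) {Xset : Set ℝ} (hXcomp : IsCompact Xset)
    (hXconv : Convex ℝ Xset) (f : ℝ → ℝ)
    (X : Fin (t + 1) → ℝ) (hX : ∀ i, X i ∈ Xset)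
    (hord : StrictMono fun i => f (X i)) :
    (∃ h : ℝ → ℝ, ContinuousOn h Xset ∧
      (∀ i j : Fin (t + 1), Real.sign (h (X i) - h (X j)) = Real.sign (f (X i) - f (X j))) ∧
      (∀ x' ∈ Xset, ∃ C : Fin k → Set ℝ, (∀ m, Convex ℝ (C m)) ∧
        {x ∈ Xset | h x' ≤ h x} = ⋃ m, C m))
    ↔ ∃ l u : Fin (t + 1) → Fin k → ℝ,
        (∀ i j : Fin (t + 1),
          (∑ m : Fin k, if l i m ≤ X j ∧ X j ≤ u i m then (1 : ℝ) else 0)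
            = if i ≤ j then 1 else 0) ∧
        (∀ i j : Fin (t + 1), i ≤ j → ∀ x : ℝ,
          (∑ m : Fin k, if l j m ≤ x ∧ x ≤ u j m then (1 : ℝ) else 0)
            ≤ ∑ m : Fin k, if l i m ≤ x ∧ x ≤ u i m then (1 : ℝ) else 0) := by
  constructor
  · rintro ⟨h, hcont, hsign, hlev⟩
    exact forward_dir f X hX hord h hsign hlev
  · rintro ⟨l, u, h1, h2⟩
    exact backward_dir hXconv f X hX hord l u h1 h2
end

section
/- Let X ⊂ ℝ^d be compact convex and let (X_1, f(X_1)), …, (X_{t+1}, f(X_{t+1})) be a sample with pairwise distinct values, ordered so that f(X_{(1)}) < ⋯ < f(X_{(t+1)}). Then there exists a continuous function h : X → ℝ with sgn(h(X_i)−h(X_j)) = sgn(f(X_i)−f(X_j)) for all i, j and with all upper level sets {x ∈ X : h(x) ≥ h(x')} convex, if and only if for every i ∈ {1,…,t} the polyhedral set {λ ∈ ℝ^i : M_i λ = X_{(t+1−i)}ᵀ, ⟨1,λ⟩ = 1, λ ⪰ 0} is empty, where M_i is the d×i matrix whose j-th column is X_{(t+2−j)}ᵀ; equivalently, X_{(k)}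 ∉ ConvHull{X_{(k+1)}, …, X_{(t+1)}} for every k ∈ {1,…,t}. -/
open MeasureTheory ProbabilityTheory Set
open scoped ENNReal NNReal BigOperators

open Metric Set

lemma aux_convexOn_infDist {E : Type*} [NormedAddCommGroup E] [NormedSpace ℝ E]
    {C : Set E} (hne : C.Nonempty) (hC : Convex ℝ C) (hcomp : IsCompact C) :
    ConvexOn ℝ Set.univ (fun x => Metric.infDist x C) := by
  refine ⟨convex_univ, fun x _ y _ a b ha hb hab => ?_⟩
  obtain ⟨zx, hzx, hdx⟩ := hcomp.exists_infDist_eq_dist hne x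
  obtain ⟨zy, hzy, hdy⟩ := hcomp.exists_infDist_eq_dist hne y
  simp only [smul_eq_mul]
  calc Metric.infDist (a • x + b • y) C ≤ dist (a • x + b • y) (a • zx + b • zy) :=
        Metric.infDist_le_dist_of_mem (hC hzx hzy ha hb hab)
    _ ≤ dist (a • x) (a • zx) + dist (b • y) (b • zy) := dist_add_add_le _ _ _ _
    _ = a * dist x zx + b * dist y zy := by
        rw [dist_smul₀, dist_smul₀, Real.norm_of_nonneg ha, Real.norm_of_nonneg hb]
    _ = a * Metric.infDist x C + b * Metric.infDist y C := by rw [hdx, hdy]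

lemma aux_concaveOn_sum {E : Type*} [NormedAddCommGroup E] [NormedSpace ℝ E]
    {s : Set E} (hs : Convex ℝ s) {ι : Type*} (T : Finset ι) (f : ι → E → ℝ)
    (h : ∀ i ∈ T, ConcaveOn ℝ s (f i)) :
    ConcaveOn ℝ s (fun x => ∑ i ∈ T, f i x) := by
  classical
  induction T using Finset.induction_on with
  | empty => simpa using concaveOn_const (0 : ℝ) hs
  | @insert a T' hnotmem ih =>
    simp only [Finset.sum_insert hnotmem]
    exact (h a (Finset.mem_insert_self _ _)).add
      (ih fun i hi => h i (Finset.mem_insert_of_mem hi))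

/-- **Proposition 21 of the paper**: a sample with pairwise distinct values can be perfectly
ranked by a ranking rule with convex level sets iff no sample point belongs to the convex hull
of the sample points with strictly larger values. -/

theorem convex_ranking_cascade_polyhedra
    {d t : ℕ} {Xset : Set (Euc d)} (hXcomp : IsCompact Xset) (hXconv : Convex ℝ Xset)
    (f : Euc d → ℝ) (X : Fin (t + 1) → Euc d) (hX : ∀ i, X i ∈ Xset)
    (hord : StrictMono fun i => f (X i)) :
    (∃ h : Euc d → ℝ, ContinuousOn h Xset ∧
      (∀ i j : Fin (t + 1), Real.sign (h (X i) - h (X j)) = Real.sign (f (X i) - f (X j))) ∧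
      (∀ x' ∈ Xset, Convex ℝ {x ∈ Xset | h x' ≤ h x}))
    ↔ ∀ i : Fin t,
        X i.castSucc ∉ convexHull ℝ (X '' {j : Fin (t + 1) | i.castSucc < j}) := by
  constructor
  · rintro ⟨h, hcont, hsign, hlev⟩ i hmem'
    have key : ∀ a b : Fin (t + 1), a < b → h (X a) < h (X b) := by
      intro a b hab
      have hf : f (X a) - f (X b) < 0 := sub_neg.mpr (hord hab)
      have hs := hsign a b
      rw [Real.sign_of_neg hf] at hs
      rcases lt_trichotomy (h (X a) - h (X b)) 0 with h' | h' | h'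
      · linarith
      · rw [h', Real.sign_zero] at hs; norm_num at hs
      · rw [Real.sign_of_pos h'] at hs; norm_num at hs
    have hconv := hlev (X i.succ) (hX i.succ)
    have hsub : X '' {j : Fin (t + 1) | i.castSucc < j} ⊆
        {x ∈ Xset | h (X i.succ) ≤ h x} := by
      rintro _ ⟨j, hj, rfl⟩
      refine ⟨hX j, ?_⟩
      have hj' : i.succ ≤ j := Fin.castSucc_lt_iff_succ_le.mp hj
      rcases eq_or_lt_of_le hj' with rfl | hlt
      · exact le_refl _
      · exact (key _ _ hlt).le
    have hin : X i.castSucc ∈ {x ∈ Xset | h (X i.succ) ≤ h x} :=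
      convexHull_min hsub hconv hmem'
    have := key i.castSucc i.succ (Fin.castSucc_lt_succ (i := i))
    linarith [hin.2]
  · intro hcasc
    rcases Nat.eq_zero_or_pos t with rfl | htpos
    · refine ⟨fun _ => 0, continuousOn_const, ?_, ?_⟩
      · intro i j
        have : i = j := Fin.ext (by omega)
        subst this; simp
      · intro x' _
        simpa using hXconv
    · classical
      have : Nonempty (Fin t) := ⟨⟨0, htpos⟩⟩
      set C : Fin (t + 1) → Set (Euc d) :=
        fun k => convexHull ℝ (X '' {j | k ≤ j}) with hCdef
      have hCcomp : ∀ k, IsCompact (C k) :=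
        fun k => ((Set.toFinite _).image X).isCompact_convexHull ℝ
      have hCconv : ∀ k, Convex ℝ (C k) := fun k => convex_convexHull ℝ _
      have hmemC : ∀ (k j : Fin (t + 1)), k ≤ j → X j ∈ C k :=
        fun k j hkj => subset_convexHull ℝ _ ⟨j, hkj, rfl⟩
      have hCne : ∀ k, (C k).Nonempty := fun k => ⟨_, hmemC k (Fin.last t) (Fin.le_last k)⟩
      have hnot : ∀ (j k : Fin (t + 1)), j < k → X j ∉ C k := by
        intro j k hjk hm
        have hjt : (j : ℕ) < t := by
          have h1 : (j : ℕ) < (k : ℕ) := hjk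
          have h2 : (k : ℕ) ≤ t := Nat.lt_succ_iff.mp k.isLt
          omega
        have hje : (⟨(j : ℕ), hjt⟩ : Fin t).castSucc = j := by
          ext; simp
        refine hcasc ⟨(j : ℕ), hjt⟩ ?_
        rw [hje]
        refine convexHull_mono (Set.image_mono ?_) hm
        intro l hl
        have : k ≤ l := hl
        simp only [Set.mem_setOf_eq, hje]
        exact lt_of_lt_of_le hjk this
      set δ : ℝ := Finset.univ.inf' Finset.univ_nonempty
        (fun k : Fin t => Metric.infDist (X k.castSucc) (C k.succ)) with hδdef
      have hδpos : 0 < δ := by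
        rw [hδdef, Finset.lt_inf'_iff]
        intro k _
        exact ((hCcomp k.succ).isClosed.notMem_iff_infDist_pos (hCne k.succ)).mp
          (hnot _ _ (Fin.castSucc_lt_succ (i := k)))
      have hδle : ∀ k : Fin t, δ ≤ Metric.infDist (X k.castSucc) (C k.succ) :=
        fun k => Finset.inf'_le _ (Finset.mem_univ k)
      set D : ℝ := Finset.univ.sup' Finset.univ_nonempty
        (fun j : Fin (t + 1) => dist (X j) (X (Fin.last t))) with hDdef
      have hDle : ∀ (j k : Fin (t + 1)), Metric.infDist (X j) (C k) ≤ D := by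
        intro j k
        refine (Metric.infDist_le_dist_of_mem
          (hmemC k (Fin.last t) (Fin.le_last k))).trans ?_
        rw [hDdef]
        exact Finset.le_sup' (fun j : Fin (t + 1) => dist (X j) (X (Fin.last t)))
          (Finset.mem_univ j)
      have hDnn : 0 ≤ D := le_trans Metric.infDist_nonneg (hDle 0 0)
      set ε : ℝ := min 1 (δ / (2 * (t + 1) * (D + 1))) with hεdef
      have hε0 : 0 < ε := by
        apply lt_min one_pos
        positivity
      have hε1 : ε ≤ 1 := min_le_left _ _
      have hkey : ((t : ℝ) + 1) * ε * D < δ := by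
        have h1 : ε ≤ δ / (2 * (t + 1) * (D + 1)) := min_le_right _ _
        have h2 : (0:ℝ) < 2 * (t + 1) * (D + 1) := by positivity
        have h3 : ε * (2 * (t + 1) * (D + 1)) ≤ δ := by
          rw [← le_div_iff₀ h2]; exact h1
        nlinarith [hε0, hDnn]
      set h : Euc d → ℝ :=
        fun x => ∑ k : Fin (t + 1), ε ^ ((k : ℕ) + 1) * (-(Metric.infDist x (C k)))
        with hhdef
      have hterm_nonpos : ∀ (x : Euc d) (k : Fin (t + 1)),
          ε ^ ((k : ℕ) + 1) * (-(Metric.infDist x (C k))) ≤ 0 := by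
        intro x k
        have := Metric.infDist_nonneg (x := x) (s := C k)
        have hp : (0:ℝ) ≤ ε ^ ((k : ℕ) + 1) := by positivity
        nlinarith
      have hzero : ∀ (k j : Fin (t + 1)), k ≤ j → Metric.infDist (X j) (C k) = 0 :=
        fun k j hkj => Metric.infDist_zero_of_mem (hmemC k j hkj)
      -- upper bound at castSucc points
      have hub : ∀ j : Fin t, h (X j.castSucc) ≤ -(ε ^ ((j : ℕ) + 2) * δ) := by
        intro j
        have hsplit : h (X j.castSucc) =
            ε ^ ((j.succ : ℕ) + 1) * (-(Metric.infDist (X j.castSucc) (C j.succ))) +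
            ∑ k ∈ Finset.univ.erase j.succ,
              ε ^ ((k : ℕ) + 1) * (-(Metric.infDist (X j.castSucc) (C k))) := by
          rw [hhdef]
          exact (Finset.add_sum_erase _ _ (Finset.mem_univ _)).symm
        rw [hsplit]
        have h1 : ∑ k ∈ Finset.univ.erase j.succ,
            ε ^ ((k : ℕ) + 1) * (-(Metric.infDist (X j.castSucc) (C k))) ≤ 0 :=
          Finset.sum_nonpos fun k _ => hterm_nonpos _ k
        have h2 : ε ^ ((j.succ : ℕ) + 1) * (-(Metric.infDist (X j.castSucc) (C j.succ)))
            ≤ -(ε ^ ((j : ℕ) + 2) * δ) := by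
          have hv : ((j.succ : Fin (t+1)) : ℕ) + 1 = (j : ℕ) + 2 := by
            simp [Fin.val_succ]
          rw [hv]
          have hp : (0:ℝ) ≤ ε ^ ((j : ℕ) + 2) := by positivity
          nlinarith [hδle j, mul_le_mul_of_nonneg_left (hδle j) hp]
        linarith
      -- lower bound at all points
      have hlb : ∀ j : Fin (t + 1),
          -(((t : ℝ) + 1) * (ε ^ ((j : ℕ) + 2) * D)) ≤ h (X j) := by
        intro j
        have hbound : ∀ k : Fin (t + 1),
            -(ε ^ ((j : ℕ) + 2) * D) ≤
              ε ^ ((k : ℕ) + 1) * (-(Metric.infDist (X j) (C k))) := by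
          intro k
          rcases le_or_gt k j with hkj | hjk
          · rw [hzero k j hkj]
            have : (0:ℝ) ≤ ε ^ ((j : ℕ) + 2) * D := by positivity
            simpa using this
          · have hk2 : (j : ℕ) + 2 ≤ (k : ℕ) + 1 := by
              have : (j : ℕ) < (k : ℕ) := hjk
              omega
            have hpow : ε ^ ((k : ℕ) + 1) ≤ ε ^ ((j : ℕ) + 2) :=
              pow_le_pow_of_le_one hε0.le hε1 hk2
            have hd : Metric.infDist (X j) (C k) ≤ D := hDle j k
            have hdn : 0 ≤ Metric.infDist (X j) (C k) := Metric.infDist_nonneg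
            have hpn : (0:ℝ) ≤ ε ^ ((k : ℕ) + 1) := by positivity
            nlinarith
        calc -(((t : ℝ) + 1) * (ε ^ ((j : ℕ) + 2) * D))
            = ∑ _k : Fin (t + 1), -(ε ^ ((j : ℕ) + 2) * D) := by
              simp [Finset.sum_const, Finset.card_univ]
          _ ≤ h (X j) := Finset.sum_le_sum fun k _ => hbound k
      have hmono : StrictMono fun i : Fin (t + 1) => h (X i) := by
        rw [Fin.strictMono_iff_lt_succ]
        intro j
        have h1 := hub j
        have h2 := hlb j.succ
        have hv : ((j.succ : Fin (t+1)) : ℕ) + 2 = (j : ℕ) + 3 := by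
          simp [Fin.val_succ]
        rw [hv] at h2
        have h3 : ((t : ℝ) + 1) * (ε ^ ((j : ℕ) + 3) * D) < ε ^ ((j : ℕ) + 2) * δ := by
          have hp : (0:ℝ) < ε ^ ((j : ℕ) + 2) := by positivity
          have : ε ^ ((j : ℕ) + 3) = ε ^ ((j : ℕ) + 2) * ε := by ring
          rw [this]
          calc ((t : ℝ) + 1) * (ε ^ ((j : ℕ) + 2) * ε * D)
              = ε ^ ((j : ℕ) + 2) * (((t : ℝ) + 1) * ε * D) := by ring
            _ < ε ^ ((j : ℕ) + 2) * δ := by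
                exact mul_lt_mul_of_pos_left hkey hp
        linarith
      refine ⟨h, ?_, ?_, ?_⟩
      · apply Continuous.continuousOn
        apply continuous_finset_sum
        intro k _
        exact continuous_const.mul (Metric.continuous_infDist_pt (C k)).neg
      · intro i j
        rcases lt_trichotomy i j with hij | rfl | hij
        · rw [Real.sign_of_neg (sub_neg.mpr (hmono hij)),
            Real.sign_of_neg (sub_neg.mpr (hord hij))]
        · simp
        · rw [Real.sign_of_pos (sub_pos.mpr (hmono hij)),
            Real.sign_of_pos (sub_pos.mpr (hord hij))]
      · intro x' hx'
        have hconc : ConcaveOn ℝ Xset h := by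
          rw [hhdef]
          apply aux_concaveOn_sum hXconv
          intro k _
          have h1 : ConvexOn ℝ Xset (fun x => Metric.infDist x (C k)) :=
            (aux_convexOn_infDist (hCne k) (hCconv k) (hCcomp k)).subset
              (Set.subset_univ _) hXconv
          have h2 := h1.neg.smul (c := ε ^ ((k : ℕ) + 1)) (by positivity)
          simpa [smul_eq_mul, Pi.neg_apply, Pi.smul_apply, mul_comm] using h2
        exact hconc.convex_ge (h x')
end

section
/- Let X ⊂ ℝ^d be a compact convex set and let f : X → ℝ be a continuous function with (c_α, α)-regular level sets and unique global maximizer x* ∈ X. Then for every radius r ∈ (0, max_{x∈X} ‖x*−x‖₂), letting S_r = {x ∈ X : ‖x*−x‖₂ = r}, one has the inclusions X ∩ B(x*, (r/c_α)^{1+α}) ⊆ {x ∈ X : f(x) ≥ min_{x_r ∈ S_r} f(x_r)} ⊆ B(x*, c_α · r^{1/(1+α)}). -/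
open MeasureTheory ProbabilityTheory Set
open scoped ENNReal NNReal BigOperators

/-- **Lemma 5 of the paper**: inclusions between balls and level sets for a continuous function
with `(c, α)`-regular level sets. -/
theorem regular_level_set_inclusions
    {d : ℕ} {Xset : Set (Euc d)} (hXcomp : IsCompact Xset) (hXconv : Convex ℝ Xset)
    {f : Euc d → ℝ} (hf : ContinuousOn f Xset)
    {xs : Euc d} {c α : ℝ} (hc : 0 < c) (hα : 0 ≤ α)
    (hreg : RegularLevelSets Xset f xs c α)
    {r : ℝ} (hr0 : 0 < r) (hrmax : ∃ x ∈ Xset, r < dist xs x) :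
    Xset ∩ Metric.closedBall xs ((r / c) ^ (1 + α))
        ⊆ {x ∈ Xset | sInf (f '' {x ∈ Xset | dist xs x = r}) ≤ f x} ∧
      {x ∈ Xset | sInf (f '' {x ∈ Xset | dist xs x = r}) ≤ f x}
        ⊆ Metric.closedBall xs (c * r ^ ((1 : ℝ) / (1 + α))) := by
  obtain ⟨hxs, hmax, -, hregs⟩ := hreg
  obtain ⟨x0, hx0, hx0r⟩ := hrmax
  have h1α : (0:ℝ) < 1 + α := by linarith
  have hseg : ∀ {a b : Euc d}, a ∈ Xset → b ∈ Xset → ∀ t ∈ Icc (0:ℝ) 1,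
      AffineMap.lineMap a b t ∈ Xset := by
    intro a b ha hb t ht
    exact hXconv.segment_subset ha hb
      ((segment_eq_image_lineMap ℝ a b).symm ▸ mem_image_of_mem _ ht)
  have hcontg : ∀ {a b : Euc d}, a ∈ Xset → b ∈ Xset →
      ContinuousOn (fun t : ℝ => f (AffineMap.lineMap a b t)) (Icc 0 1) := by
    intro a b ha hb
    exact hf.comp (AffineMap.lineMap_continuous.continuousOn)
      (fun t ht => hseg ha hb t ht)
  set Sr := {x ∈ Xset | dist xs x = r} with hSrdef
  -- Sr is nonempty
  have hSrne : Sr.Nonempty := by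
    have hcont : ContinuousOn (fun t : ℝ => dist xs (AffineMap.lineMap xs x0 t)) (Icc 0 1) :=
      (continuous_const.dist (AffineMap.lineMap_continuous (R := ℝ))).continuousOn
    have h01 : (0:ℝ) ≤ 1 := zero_le_one
    have hmem : r ∈ Icc (dist xs (AffineMap.lineMap xs x0 (0:ℝ)))
        (dist xs (AffineMap.lineMap xs x0 (1:ℝ))) := by
      simp only [AffineMap.lineMap_apply_zero, AffineMap.lineMap_apply_one, dist_self]
      exact ⟨hr0.le, hx0r.le⟩
    obtain ⟨t, ht, hgt⟩ := intermediate_value_Icc h01 hcont hmem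
    exact ⟨AffineMap.lineMap xs x0 t, hseg hxs hx0 t ht, hgt⟩
  -- Sr is compact
  have hSrcomp : IsCompact Sr := by
    have : Sr = Xset ∩ {x | dist xs x = r} := rfl
    rw [this]
    exact hXcomp.inter_right (isClosed_eq (continuous_const.dist continuous_id) continuous_const)
  have hSrX : Sr ⊆ Xset := fun x hx => hx.1
  have himg : IsCompact (f '' Sr) := hSrcomp.image_of_continuousOn (hf.mono hSrX)
  set m := sInf (f '' Sr) with hmdef
  obtain ⟨xr, hxrS, hxrm⟩ := himg.sInf_mem (hSrne.image f)
  have hxrX : xr ∈ Xset := hxrS.1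
  have hxrr : dist xs xr = r := hxrS.2
  have hmle : m ≤ f xs := by rw [hmdef, ← hxrm]; exact hmax xr hxrX
  have hrpow_inv : ∀ {s : ℝ}, 0 ≤ s → (s ^ ((1:ℝ)/(1+α))) ^ (1+α) = s := by
    intro s hs
    rw [← Real.rpow_mul hs, one_div_mul_cancel h1α.ne', Real.rpow_one]
  constructor
  · -- first inclusion
    rintro x ⟨hx, hxball⟩
    refine ⟨hx, ?_⟩
    by_contra hlt
    push_neg at hlt
    -- f x < m; find x' on segment [x, xs] with f x' = m
    have hmem : m ∈ Icc (f (AffineMap.lineMap x xs (0:ℝ))) (f (AffineMap.lineMap x xs (1:ℝ))) := by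
      simp only [AffineMap.lineMap_apply_zero, AffineMap.lineMap_apply_one]
      exact ⟨hlt.le, hmle⟩
    obtain ⟨t, ht, hgt⟩ := intermediate_value_Icc zero_le_one (hcontg hx hxs) hmem
    set x' := AffineMap.lineMap x xs t with hx'def
    have hx'X : x' ∈ Xset := hseg hx hxs t ht
    have hreq : f xr = f x' := by
      have hgt' : f x' = m := hgt
      rw [hgt', hxrm]
    have hkey : r ≤ c * dist xs x' ^ ((1:ℝ)/(1+α)) := hxrr ▸ hregs xr hxrX x' hx'X hreq
    have hkey2 : (r / c) ^ (1 + α) ≤ dist xs x' := by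
      have h1 : r / c ≤ dist xs x' ^ ((1:ℝ)/(1+α)) := (div_le_iff₀' hc).mpr hkey
      calc (r / c) ^ (1 + α) ≤ (dist xs x' ^ ((1:ℝ)/(1+α))) ^ (1 + α) :=
            Real.rpow_le_rpow (div_pos hr0 hc).le h1 h1α.le
        _ = dist xs x' := hrpow_inv dist_nonneg
    -- but x' is strictly closer than x (or x = xs)
    have ht0 : t ≠ 0 := by
      intro h
      rw [h] at hgt
      simp only [AffineMap.lineMap_apply_zero] at hgt
      exact absurd hgt.symm hlt.ne'
    have hxxs : x ≠ xs := by
      intro h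
      exact absurd (h ▸ hmle) (not_le.mpr (h ▸ hlt))
    have hdpos : 0 < dist x xs := dist_pos.mpr hxxs
    have hlt2 : dist xs x' < dist x xs := by
      have : dist x' xs = ‖1 - t‖ * dist x xs := dist_lineMap_right x xs t
      rw [dist_comm, this, Real.norm_eq_abs, abs_of_nonneg (by linarith [ht.2])]
      nlinarith [ht.1, ht.2, lt_of_le_of_ne ht.1 (Ne.symm ht0)]
    have hxd : dist x xs ≤ (r / c) ^ (1 + α) := Metric.mem_closedBall.mp hxball
    linarith
  · -- second inclusion
    rintro x ⟨hx, hmx⟩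
    -- find x' on segment [xr, xs] with f x' = f x
    have hmem : f x ∈ Icc (f (AffineMap.lineMap xr xs (0:ℝ))) (f (AffineMap.lineMap xr xs (1:ℝ))) := by
      simp only [AffineMap.lineMap_apply_zero, AffineMap.lineMap_apply_one]
      exact ⟨hxrm ▸ hmx, hmax x hx⟩
    obtain ⟨t, ht, hgt⟩ := intermediate_value_Icc zero_le_one (hcontg hxrX hxs) hmem
    set x' := AffineMap.lineMap xr xs t with hx'def
    have hx'X : x' ∈ Xset := hseg hxrX hxs t ht
    have hkey : dist xs x ≤ c * dist xs x' ^ ((1:ℝ)/(1+α)) := hregs x hx x' hx'X hgt.symm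
    have hd' : dist xs x' ≤ r := by
      have : dist x' xs = ‖1 - t‖ * dist xr xs := dist_lineMap_right xr xs t
      rw [dist_comm, this, Real.norm_eq_abs, abs_of_nonneg (by linarith [ht.2]),
        dist_comm xr xs, hxrr]
      nlinarith [ht.1, ht.2, hr0]
    rw [Metric.mem_closedBall, dist_comm]
    calc dist xs x ≤ c * dist xs x' ^ ((1:ℝ)/(1+α)) := hkey
      _ ≤ c * r ^ ((1:ℝ)/(1+α)) :=
          mul_le_mul_of_nonneg_left (Real.rpow_le_rpow dist_nonneg hd' (by positivity)) hc.le
end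

section
/- Let X ⊂ ℝ^d be a compact convex set with nonempty interior, let f : X → ℝ have a continuous induced ranking rule, and let (X*_1, …, X*_n) be a Pure Adaptive Search for f on X. Then for every u ∈ [0,1], P(μ(X*^n)/μ(X) ≤ u) ≤ P(∏_{i=1}^n U_i ≤ u), where X*^n = {x ∈ X : f(x) ≥ f(X*_n)} and U_1, …, U_n are independent random variables uniformly distributed on [0,1]. -/
open MeasureTheory ProbabilityTheory Set
open scoped ENNReal NNReal BigOperators

section PasAuxiliary

open MeasureTheory ProbabilityTheory Set
open scoped ENNReal NNReal BigOperators

noncomputable section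

namespace PasAux

variable {d : ℕ}

/-- Measure of the superlevel set at threshold `t`. -/
def Gfun (Xset : Set (Euc d)) (H : Euc d → ℝ) (t : ℝ) : ℝ≥0∞ :=
  volume {x ∈ Xset | t ≤ H x}

lemma Gfun_antitone (Xset : Set (Euc d)) (H : Euc d → ℝ) : Antitone (Gfun Xset H) :=
  fun _ _ hab => measure_mono fun _ hx => ⟨hx.1, hab.trans hx.2⟩

/-- Volume of the superlevel set of the value at `z`. -/
def gH (Xset : Set (Euc d)) (H : Euc d → ℝ) (z : Euc d) : ℝ≥0∞ :=
  Gfun Xset H (H z)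

lemma gH_measurable {Xset : Set (Euc d)} {H : Euc d → ℝ} (hH : Continuous H) :
    Measurable (gH Xset H) :=
  (Gfun_antitone Xset H).measurable.comp hH.measurable

/-- Key outer-measure bound: any subset of `Xset` all of whose points have superlevel sets of
measure at most `c` itself has measure at most `c`. -/
lemma vol_le {Xset : Set (Euc d)} {H : Euc d → ℝ} (hbdd : BddBelow (H '' Xset))
    {c : ℝ≥0∞} {A : Set (Euc d)} (hA : A ⊆ Xset)
    (hAc : ∀ y ∈ A, gH Xset H y ≤ c) : volume A ≤ c := by
  rcases A.eq_empty_or_nonempty with rfl | hne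
  · simp
  have hbddA : BddBelow (H '' A) := hbdd.mono (Set.image_mono hA)
  set m := sInf (H '' A) with hm
  have hmle : ∀ y ∈ A, m ≤ H y := fun y hy => csInf_le hbddA ⟨y, hy, rfl⟩
  by_cases hatt : ∃ y₀ ∈ A, H y₀ = m
  · obtain ⟨y₀, hy₀, hH0⟩ := hatt
    have hsub : A ⊆ {x ∈ Xset | H y₀ ≤ H x} := by
      intro y hy
      exact ⟨hA hy, hH0 ▸ hmle y hy⟩
    exact le_trans (measure_mono hsub) (hAc y₀ hy₀)
  · have hex : ∀ k : ℕ, ∃ y ∈ A, H y < m + 1 / (k + 1) := by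
      intro k
      by_contra hcon
      push_neg at hcon
      have hlb : m + 1 / ((k : ℝ) + 1) ≤ m := by
        refine le_csInf (hne.image H) ?_
        rintro b ⟨y, hy, rfl⟩
        exact hcon y hy
      have hpos : (0 : ℝ) < 1 / ((k : ℝ) + 1) := by positivity
      linarith
    choose yk hykA hyk using hex
    have hcov : A ⊆ ⋃ k : ℕ, {x ∈ Xset | m + 1 / ((k : ℝ) + 1) ≤ H x} := by
      intro y hy
      have h1 : m < H y :=
        lt_of_le_of_ne (hmle y hy) fun h => hatt ⟨y, hy, h.symm⟩
      obtain ⟨k, hk⟩ := exists_nat_one_div_lt (sub_pos.mpr h1)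
      exact Set.mem_iUnion.mpr ⟨k, hA hy, by linarith⟩
    refine le_trans (measure_mono hcov) ?_
    have hmono : Monotone (fun k : ℕ => {x ∈ Xset | m + 1 / ((k : ℝ) + 1) ≤ H x}) := by
      intro k l hkl x hx
      refine ⟨hx.1, le_trans (by
        have : (1 : ℝ) / ((l : ℝ) + 1) ≤ 1 / ((k : ℝ) + 1) := by
          apply one_div_le_one_div_of_le (by positivity)
          exact_mod_cast by omega
        linarith) hx.2⟩
    rw [(hmono.directed_le).measure_iUnion]
    refine iSup_le fun k => ?_
    refine le_trans (measure_mono ?_) (hAc (yk k) (hykA k))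
    intro x hx
    exact ⟨hx.1, le_trans (hyk k).le hx.2⟩

/-- The uniform measure of the exceptional sublevel-volume set is bounded by the measure of a
corresponding set of uniform `[0,1]` variables. -/
lemma unifOn_levelset_le {Xset : Set (Euc d)} {H : Euc d → ℝ} (hbdd : BddBelow (H '' Xset))
    (hH : Continuous H) (hfin : volume Xset ≠ ∞) {c : ℝ≥0∞} {B : Set (Euc d)} (hB : B ⊆ Xset) :
    unifOn B {z | gH Xset H z ≤ c}
      ≤ volume.restrict (Icc (0 : ℝ) 1) {r : ℝ | volume B * ENNReal.ofReal r ≤ c} := by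
  set vB := volume B with hvB
  have hvfin : vB ≠ ∞ := ((measure_mono hB).trans_lt hfin.lt_top).ne
  have hE : MeasurableSet {z | gH Xset H z ≤ c} :=
    measurableSet_le (gH_measurable hH) measurable_const
  have hLHS : unifOn B {z | gH Xset H z ≤ c}
      = vB⁻¹ * volume ({z | gH Xset H z ≤ c} ∩ B) := by
    rw [unifOn, Measure.smul_apply, smul_eq_mul, Measure.restrict_apply hE]
  have hEc : volume ({z | gH Xset H z ≤ c} ∩ B) ≤ c :=
    vol_le hbdd (inter_subset_right.trans hB) fun _ hy => hy.1
  have hEB : volume ({z | gH Xset H z ≤ c} ∩ B) ≤ vB := measure_mono inter_subset_right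
  have hSmeas : MeasurableSet {r : ℝ | vB * ENNReal.ofReal r ≤ c} :=
    measurableSet_le (measurable_const.mul ENNReal.measurable_ofReal) measurable_const
  rcases eq_or_ne vB 0 with hv0 | hv0
  · have h0 : volume ({z | gH Xset H z ≤ c} ∩ B) = 0 :=
      le_antisymm (hEB.trans hv0.le) zero_le
    rw [hLHS, h0, mul_zero]
    exact zero_le
  by_cases hcv : vB ≤ c
  · have hIcc : Icc (0 : ℝ) 1 ⊆ {r | vB * ENNReal.ofReal r ≤ c} := by
      intro r hr
      have h1 : ENNReal.ofReal r ≤ 1 := ENNReal.ofReal_le_one.mpr hr.2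
      calc vB * ENNReal.ofReal r ≤ vB * 1 := mul_le_mul_right h1 _
        _ = vB := mul_one _
        _ ≤ c := hcv
    have hRHS : volume.restrict (Icc (0 : ℝ) 1) {r | vB * ENNReal.ofReal r ≤ c} = 1 := by
      rw [Measure.restrict_apply hSmeas, Set.inter_eq_self_of_subset_right hIcc,
        Real.volume_Icc]
      norm_num
    rw [hLHS, hRHS]
    calc vB⁻¹ * volume ({z | gH Xset H z ≤ c} ∩ B) ≤ vB⁻¹ * vB := mul_le_mul_right hEB _
      _ = 1 := ENNReal.inv_mul_cancel hv0 hvfin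
  · push_neg at hcv
    have hcfin : c ≠ ∞ := (hcv.trans hvfin.lt_top).ne
    have hdivfin : c / vB ≠ ∞ := (ENNReal.div_lt_top hcfin hv0).ne
    set t := (c / vB).toReal with ht
    have hdle1 : c / vB ≤ 1 := by
      rw [ENNReal.div_le_iff hv0 hvfin, one_mul]
      exact hcv.le
    have ht1 : t ≤ 1 := by
      have h := ENNReal.toReal_mono ENNReal.one_ne_top hdle1
      rw [ENNReal.toReal_one] at h
      exact h
    have hsub : Icc (0 : ℝ) t ⊆ {r | vB * ENNReal.ofReal r ≤ c} ∩ Icc 0 1 := by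
      intro r hr
      refine ⟨?_, hr.1, hr.2.trans ht1⟩
      have h1 : ENNReal.ofReal r ≤ c / vB := by
        calc ENNReal.ofReal r ≤ ENNReal.ofReal t := ENNReal.ofReal_le_ofReal hr.2
          _ = c / vB := ENNReal.ofReal_toReal hdivfin
      calc vB * ENNReal.ofReal r ≤ vB * (c / vB) := mul_le_mul_right h1 _
        _ ≤ c := ENNReal.mul_div_le
    have hRHS : c / vB ≤ volume.restrict (Icc (0 : ℝ) 1) {r | vB * ENNReal.ofReal r ≤ c} := by
      rw [Measure.restrict_apply hSmeas]
      refine le_trans ?_ (measure_mono hsub)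
      rw [Real.volume_Icc, sub_zero, ht, ENNReal.ofReal_toReal hdivfin]
    rw [hLHS]
    refine le_trans ?_ hRHS
    calc vB⁻¹ * volume ({z | gH Xset H z ≤ c} ∩ B) ≤ vB⁻¹ * c := mul_le_mul_right hEc _
      _ = c / vB := by rw [div_eq_mul_inv, mul_comm]

/-- CDF-type function for the product of `k` independent uniforms. -/
def Fk (k : ℕ) (s : ℝ≥0∞) : ℝ≥0∞ :=
  (Measure.pi fun _ : Fin k => volume.restrict (Icc (0 : ℝ) 1))
    {v | ENNReal.ofReal (∏ i, v i) ≤ s}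

lemma ae01_pos : ∀ᵐ r ∂(volume.restrict (Icc (0 : ℝ) 1)), 0 < r := by
  rw [ae_restrict_iff' measurableSet_Icc]
  have h0 : volume ({(0 : ℝ)} : Set ℝ) = 0 := measure_singleton 0
  refine measure_mono_null ?_ h0
  intro r hr
  simp only [mem_compl_iff, mem_setOf_eq, not_forall] at hr ⊢
  obtain ⟨hrIcc, hrpos⟩ := hr
  have : r = 0 := le_antisymm (not_lt.mp hrpos) hrIcc.1
  simp [this]

lemma Fk_one_ge (s : ℝ≥0∞) :
    volume.restrict (Icc (0 : ℝ) 1) {r : ℝ | ENNReal.ofReal r ≤ s} ≤ Fk 1 s := by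
  have mp := measurePreserving_funUnique (volume.restrict (Icc (0 : ℝ) 1)) (Fin 1)
  have hT : MeasurableSet {r : ℝ | ENNReal.ofReal r ≤ s} :=
    measurableSet_le ENNReal.measurable_ofReal measurable_const
  rw [← mp.measure_preimage hT.nullMeasurableSet]
  refine measure_mono ?_
  intro v hv
  simp only [mem_preimage, MeasurableEquiv.funUnique_apply, mem_setOf_eq] at hv ⊢
  rw [Fin.prod_univ_one]
  exact hv

lemma Fk_rec (k : ℕ) (s : ℝ≥0∞) :
    ∫⁻ r in Icc (0 : ℝ) 1, Fk k (s / ENNReal.ofReal r) ≤ Fk (k + 1) s := by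
  set μ01 := volume.restrict (Icc (0 : ℝ) 1) with hμ01
  set pik := Measure.pi fun _ : Fin k => μ01 with hpik
  have mp := measurePreserving_piFinSuccAbove (fun _ : Fin (k + 1) => μ01) 0
  set U : Set (ℝ × (Fin k → ℝ)) := {p | ENNReal.ofReal (p.1 * ∏ i, p.2 i) ≤ s} with hU
  have hmul : Measurable fun p : ℝ × (Fin k → ℝ) => p.1 * ∏ i, p.2 i :=
    measurable_fst.mul (Finset.measurable_prod _ fun i _ =>
      (measurable_pi_apply i).comp measurable_snd)
  have hUm : MeasurableSet U :=
    measurableSet_le (ENNReal.measurable_ofReal.comp hmul) measurable_const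
  have hkey : Fk (k + 1) s = (μ01.prod pik) U := by
    rw [← mp.measure_preimage hUm.nullMeasurableSet]
    unfold Fk
    congr 1
    ext v
    show ENNReal.ofReal (∏ i, v i) ≤ s ↔ _
    simp only [mem_preimage, mem_setOf_eq, hU, MeasurableEquiv.piFinSuccAbove,
      MeasurableEquiv.coe_mk, Fin.insertNthEquiv, Equiv.coe_fn_symm_mk, Fin.removeNth]
    rw [Fin.prod_univ_succAbove (fun i => v i) 0]
  rw [hkey, Measure.prod_apply hUm]
  refine lintegral_mono_ae ?_
  filter_upwards [ae01_pos] with r hr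
  have hsub : {w : Fin k → ℝ | ENNReal.ofReal (∏ i, w i) ≤ s / ENNReal.ofReal r}
      ⊆ Prod.mk r ⁻¹' U := by
    intro w hw
    simp only [mem_setOf_eq] at hw
    simp only [mem_preimage, hU, mem_setOf_eq]
    rw [ENNReal.ofReal_mul hr.le]
    calc ENNReal.ofReal r * ENNReal.ofReal (∏ i, w i)
        ≤ ENNReal.ofReal r * (s / ENNReal.ofReal r) := mul_le_mul_right hw _
      _ ≤ s := ENNReal.mul_div_le
  exact measure_mono hsub

lemma sign_nonpos_iff' (x : ℝ) : x ≤ 0 ↔ Real.sign x ≤ 0 := by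
  rcases lt_trichotomy x 0 with h | h | h
  · simp [Real.sign_of_neg h, h.le]
  · simp [h]
  · simp [Real.sign_of_pos h, h, not_le.mpr h]

lemma le_iff_of_sign_eq {a b a' b' : ℝ} (h : Real.sign (a - b) = Real.sign (a' - b')) :
    a ≤ b ↔ a' ≤ b' := by
  rw [← sub_nonpos, ← sub_nonpos (a := a')]
  constructor
  · intro h1
    exact (sign_nonpos_iff' _).mpr (h ▸ (sign_nonpos_iff' _).mp h1)
  · intro h1
    exact (sign_nonpos_iff' _).mpr (h.symm ▸ (sign_nonpos_iff' _).mp h1)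

end PasAux

end
end PasAuxiliary

/-- **Lemma 24 of the paper**: the normalized volume of the level set of the last value of a
Pure Adaptive Search is stochastically larger than a product of `n` independent uniforms. -/
theorem pas_level_set_volume
    {d : ℕ} {Xset : Set (Euc d)} (hXcomp : IsCompact Xset) (hXconv : Convex ℝ Xset)
    (hXint : (interior Xset).Nonempty)
    {f : Euc d → ℝ} (hf : HasContinuousRanking Xset f)
    {Ω : Type*} [MeasurableSpace Ω] {P : Measure Ω} [IsProbabilityMeasure P]
    {n : ℕ} (hn : 0 < n) {X : Fin n → Ω → Euc d}
    (hpas : IsPureAdaptiveSearch P Xset f n X)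
    {u : ℝ} (hu : u ∈ Set.Icc (0 : ℝ) 1) :
    P {ω | volume {x ∈ Xset | f (X ⟨n - 1, by omega⟩ ω) ≤ f x} / volume Xset
        ≤ ENNReal.ofReal u}
      ≤ (Measure.pi fun _ : Fin n => volume.restrict (Set.Icc (0 : ℝ) 1))
          {v | ∏ i : Fin n, v i ≤ u} := by
  classical
  obtain ⟨hXm, hX0, hcond⟩ := hpas
  obtain ⟨h, hcont, hsign⟩ := hf
  have hXcl : IsClosed Xset := hXcomp.isClosed
  have hXmeas : MeasurableSet Xset := hXcl.measurableSet
  have hμfin : volume Xset ≠ ∞ := hXcomp.measure_lt_top.ne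
  have hμ0 : volume Xset ≠ 0 := by
    refine (lt_of_lt_of_le ?_ (measure_mono interior_subset)).ne'
    exact isOpen_interior.measure_pos volume hXint
  -- Tietze extension of the continuous ranking representative
  obtain ⟨H, hHc, hHeq⟩ : ∃ H : Euc d → ℝ, Continuous H ∧ ∀ x ∈ Xset, H x = h x := by
    obtain ⟨g, hg⟩ := ContinuousMap.exists_restrict_eq hXcl
      (⟨Xset.restrict h, hcont.restrict⟩ : C(Xset, ℝ))
    exact ⟨g, g.continuous, fun x hx => ContinuousMap.congr_fun hg ⟨x, hx⟩⟩
  have hbdd : BddBelow (H '' Xset) := (hXcomp.image hHc).bddBelow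
  -- order equivalence of f and H on Xset
  have hiff : ∀ z ∈ Xset, ∀ x ∈ Xset, (f z ≤ f x ↔ H z ≤ H x) := by
    intro z hz x hx
    rw [hHeq z hz, hHeq x hx]
    exact PasAux.le_iff_of_sign_eq (hsign z hz x hx)
  have hlevel : ∀ z ∈ Xset, {x ∈ Xset | f z ≤ f x} = {x ∈ Xset | H z ≤ H x} := by
    intro z hz
    ext x
    exact and_congr_right fun hx => hiff z hz x hx
  -- a.e. membership of the iterates in Xset
  have hmem : ∀ (t : ℕ) (ht : t < n), ∀ᵐ ω ∂P, X ⟨t, ht⟩ ω ∈ Xset := by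
    intro t ht
    rw [ae_iff]
    show P (X ⟨t, ht⟩ ⁻¹' Xsetᶜ) = 0
    cases t with
    | zero =>
      rw [← Measure.map_apply (hXm _) hXmeas.compl, hX0 ht, unifOn, Measure.smul_apply,
        smul_eq_mul, Measure.restrict_apply hXmeas.compl, compl_inter_self, measure_empty,
        mul_zero]
    | succ t' =>
      have ht' : t' < n := by omega
      have heq := setLIntegral_preimage_condDistrib (μ := P) (X := X ⟨t', ht'⟩)
        (Y := X ⟨t' + 1, ht⟩) (hXm _) (hXm _).aemeasurable hXmeas.compl MeasurableSet.univ
      rw [preimage_univ, Measure.restrict_univ, univ_inter] at heq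
      rw [← heq]
      have hz : ∀ᵐ ω ∂P,
          condDistrib (X ⟨t' + 1, ht⟩) (X ⟨t', ht'⟩) P (X ⟨t', ht'⟩ ω) Xsetᶜ = 0 := by
        filter_upwards [hcond t' ht] with ω hω
        rw [hω, unifOn, Measure.smul_apply, smul_eq_mul,
          Measure.restrict_apply hXmeas.compl]
        have h0 : volume (Xsetᶜ ∩ {x ∈ Xset | f (X ⟨t', ht'⟩ ω) ≤ f x}) = 0 :=
          measure_mono_null (fun y hy => (hy.1 hy.2.1).elim) measure_empty
        rw [h0, mul_zero]
      rw [lintegral_congr_ae hz, lintegral_zero]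
  -- the main inductive claim
  have claim : ∀ (t : ℕ) (ht : t < n) (c : ℝ≥0∞),
      P {ω | PasAux.gH Xset H (X ⟨t, ht⟩ ω) ≤ c} ≤ PasAux.Fk (t + 1) (c / volume Xset) := by
    intro t
    induction t with
    | zero =>
      intro ht c
      have hE : MeasurableSet {z | PasAux.gH Xset H z ≤ c} :=
        measurableSet_le (PasAux.gH_measurable hHc) measurable_const
      have hP : P {ω | PasAux.gH Xset H (X ⟨0, ht⟩ ω) ≤ c}
          = unifOn Xset {z | PasAux.gH Xset H z ≤ c} := by
        rw [← hX0 ht, Measure.map_apply (hXm _) hE]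
        rfl
      rw [hP]
      refine le_trans (PasAux.unifOn_levelset_le hbdd hHc hμfin (subset_refl Xset)) ?_
      refine le_trans (measure_mono ?_) (PasAux.Fk_one_ge (c / volume Xset))
      intro r hr
      have hr' : volume Xset * ENNReal.ofReal r ≤ c := hr
      exact (ENNReal.le_div_iff_mul_le (Or.inl hμ0) (Or.inl hμfin)).mpr
        (by rw [mul_comm]; exact hr')
    | succ t' IH =>
      intro ht c
      have ht' : t' < n := by omega
      have hE : MeasurableSet {z | PasAux.gH Xset H z ≤ c} :=
        measurableSet_le (PasAux.gH_measurable hHc) measurable_const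
      have heq := setLIntegral_preimage_condDistrib (μ := P) (X := X ⟨t', ht'⟩)
        (Y := X ⟨t' + 1, ht⟩) (hXm _) (hXm _).aemeasurable hE MeasurableSet.univ
      rw [preimage_univ, Measure.restrict_univ, univ_inter] at heq
      have hgoal : P {ω | PasAux.gH Xset H (X ⟨t' + 1, ht⟩ ω) ≤ c}
          = P (X ⟨t' + 1, ht⟩ ⁻¹' {z | PasAux.gH Xset H z ≤ c}) := rfl
      rw [hgoal, ← heq]
      have hbound : ∀ᵐ ω ∂P,
          condDistrib (X ⟨t' + 1, ht⟩) (X ⟨t', ht'⟩) P (X ⟨t', ht'⟩ ω)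
              {z | PasAux.gH Xset H z ≤ c}
            ≤ volume.restrict (Icc (0 : ℝ) 1)
              {r : ℝ | PasAux.gH Xset H (X ⟨t', ht'⟩ ω) * ENNReal.ofReal r ≤ c} := by
        filter_upwards [hcond t' ht, hmem t' ht'] with ω hω hωmem
        rw [hω, hlevel _ hωmem]
        exact PasAux.unifOn_levelset_le hbdd hHc hμfin fun x hx => hx.1
      refine le_trans (lintegral_mono_ae hbound) ?_
      set a : Ω → ℝ≥0∞ := fun ω => PasAux.gH Xset H (X ⟨t', ht'⟩ ω) with ha
      have ham : Measurable a := (PasAux.gH_measurable hHc).comp (hXm _)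
      set S : Set (Ω × ℝ) := {p | a p.1 * ENNReal.ofReal p.2 ≤ c} with hS
      have hSm : MeasurableSet S :=
        measurableSet_le ((ham.comp measurable_fst).mul
          (ENNReal.measurable_ofReal.comp measurable_snd)) measurable_const
      have hswap : ∫⁻ ω, volume.restrict (Icc (0 : ℝ) 1)
            {r : ℝ | a ω * ENNReal.ofReal r ≤ c} ∂P
          = ∫⁻ r in Icc (0 : ℝ) 1, P {ω | a ω * ENNReal.ofReal r ≤ c} ∂volume := by
        have h1 : ∫⁻ ω, volume.restrict (Icc (0 : ℝ) 1)
              {r : ℝ | a ω * ENNReal.ofReal r ≤ c} ∂P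
            = (P.prod (volume.restrict (Icc (0 : ℝ) 1))) S :=
          (Measure.prod_apply hSm).symm
        have h2 : (P.prod (volume.restrict (Icc (0 : ℝ) 1))) S
            = ∫⁻ r in Icc (0 : ℝ) 1, P {ω | a ω * ENNReal.ofReal r ≤ c} ∂volume :=
          Measure.prod_apply_symm hSm
        rw [h1, h2]
      rw [hswap]
      refine le_trans (lintegral_mono_ae ?_) (PasAux.Fk_rec (t' + 1) (c / volume Xset))
      filter_upwards [PasAux.ae01_pos] with r hr
      have hr0 : ENNReal.ofReal r ≠ 0 := (ENNReal.ofReal_pos.mpr hr).ne'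
      have hrt : ENNReal.ofReal r ≠ ∞ := ENNReal.ofReal_ne_top
      have hset : {ω | a ω * ENNReal.ofReal r ≤ c}
          = {ω | a ω ≤ c / ENNReal.ofReal r} := by
        ext ω
        exact (ENNReal.le_div_iff_mul_le (Or.inl hr0) (Or.inl hrt)).symm
      rw [hset]
      refine le_trans (IH ht' (c / ENNReal.ofReal r)) ?_
      have hcomm : c / ENNReal.ofReal r / volume Xset
          = c / volume Xset / ENNReal.ofReal r := by
        rw [div_eq_mul_inv, div_eq_mul_inv, div_eq_mul_inv, div_eq_mul_inv, mul_right_comm]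
      rw [hcomm]
  -- final assembly
  have hn1 : n - 1 < n := by omega
  have hAE : {ω | volume {x ∈ Xset | f (X ⟨n - 1, by omega⟩ ω) ≤ f x} / volume Xset
        ≤ ENNReal.ofReal u}
      =ᵐ[P] {ω | PasAux.gH Xset H (X ⟨n - 1, hn1⟩ ω) ≤ ENNReal.ofReal u * volume Xset} := by
    filter_upwards [hmem (n - 1) hn1] with ω hω
    have h1 : {x ∈ Xset | f (X ⟨n - 1, hn1⟩ ω) ≤ f x}
        = {x ∈ Xset | H (X ⟨n - 1, hn1⟩ ω) ≤ H x} := hlevel _ hω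
    show (volume {x ∈ Xset | f (X ⟨n - 1, hn1⟩ ω) ≤ f x} / volume Xset
        ≤ ENNReal.ofReal u)
      = (PasAux.gH Xset H (X ⟨n - 1, hn1⟩ ω) ≤ ENNReal.ofReal u * volume Xset)
    rw [h1]
    simp only [eq_iff_iff]
    exact ENNReal.div_le_iff hμ0 hμfin
  rw [measure_congr hAE]
  have hfinal := claim (n - 1) hn1 (ENNReal.ofReal u * volume Xset)
  have hidx : n - 1 + 1 = n := by omega
  rw [hidx] at hfinal
  have hcancel : ENNReal.ofReal u * volume Xset / volume Xset = ENNReal.ofReal u := by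
    rw [mul_div_assoc, ENNReal.div_self hμ0 hμfin, mul_one]
  rw [hcancel] at hfinal
  refine le_trans hfinal ?_
  have hsets : {v : Fin n → ℝ | ENNReal.ofReal (∏ i, v i) ≤ ENNReal.ofReal u}
      = {v : Fin n → ℝ | ∏ i, v i ≤ u} := by
    ext v
    exact ENNReal.ofReal_le_ofReal_iff hu.1
  rw [PasAux.Fk, hsets]
end

section
/- Let U_1, …, U_n be independent random variables uniformly distributed on [0,1]. Then for every δ ∈ (0,1), P(∏_{i=1}^n U_i < δ · exp(−n − √(2n·ln(1/δ)))) < δ. -/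
open MeasureTheory ProbabilityTheory Set
open scoped ENNReal NNReal BigOperators

section Aux

open MeasureTheory Real

lemma lintegral_pi_prod_eq_pow {m : ℕ} {μ : Measure ℝ} [SigmaFinite μ] {g : ℝ → ℝ≥0∞}
    (hg : Measurable g) :
    ∫⁻ v : Fin m → ℝ, ∏ i, g (v i) ∂(Measure.pi fun _ : Fin m => μ)
      = (∫⁻ x, g x ∂μ) ^ m := by
  induction m with
  | zero => simp
  | succ k ih =>
    have h := (measurePreserving_piFinSuccAbove (fun _ : Fin (k + 1) => μ) 0).symm
    rw [h.lintegral_map_equiv (fun v => ∏ i, g (v i)) _]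
    have heq : ∀ p : ℝ × (Fin k → ℝ),
        (∏ i, g (((MeasurableEquiv.piFinSuccAbove (fun _ : Fin (k + 1) => ℝ) 0).symm p) i))
          = g p.1 * ∏ j, g (p.2 j) := by
      intro p
      simp only [MeasurableEquiv.piFinSuccAbove_symm_apply, Fin.insertNthEquiv,
        Fin.insertNth_zero, Equiv.coe_fn_mk]
      rw [Fin.prod_univ_succ]
      simp [Fin.cons_zero, Fin.cons_succ]
    simp_rw [heq]
    calc ∫⁻ a : ℝ × (Fin k → ℝ), g a.1 * ∏ j, g (a.2 j)
            ∂μ.prod (Measure.pi fun _ : Fin k => μ)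
        = (∫⁻ x, g x ∂μ) * ∫⁻ y : Fin k → ℝ, ∏ j, g (y j)
            ∂(Measure.pi fun _ : Fin k => μ) :=
          lintegral_prod_mul hg.aemeasurable
            ((Finset.measurable_prod Finset.univ fun j _ =>
              hg.comp (measurable_pi_apply j)).aemeasurable)
      _ = (∫⁻ x, g x ∂μ) ^ (k + 1) := by rw [ih, pow_succ]; ring

lemma key_log_ineq {N L : ℝ} (hN : 1 ≤ N) (hL : 0 < L) :
    N * Real.log ((N + Real.sqrt (2 * N * L) + L) / N) < Real.sqrt (2 * N * L) := by
  have hN0 : 0 < N := by linarith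
  set s := Real.sqrt (2 * N * L) with hsdef
  have hs0 : 0 < s := Real.sqrt_pos.mpr (by positivity)
  have hsq : s ^ 2 = 2 * N * L := Real.sq_sqrt (by positivity)
  have hx0 : 0 < (N + s + L) / N := by positivity
  have hexp : (N + s + L) / N < Real.exp (s / N) := by
    have h4 : ∑ i ∈ Finset.range 4, (s / N) ^ i / (Nat.factorial i) ≤ Real.exp (s / N) :=
      Real.sum_le_exp_of_nonneg (by positivity) 4
    have hsum : ∑ i ∈ Finset.range 4, (s / N) ^ i / (Nat.factorial i)
        = 1 + s / N + (s / N) ^ 2 / 2 + (s / N) ^ 3 / 6 := by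
      norm_num [Finset.sum_range_succ, Nat.factorial]
    have hq : (s / N) ^ 2 / 2 = L / N := by
      rw [div_pow, hsq]
      field_simp
    have hc : 0 < (s / N) ^ 3 / 6 := by positivity
    have : (N + s + L) / N = 1 + s / N + L / N := by field_simp
    rw [this]
    calc 1 + s / N + L / N < 1 + s / N + (s / N) ^ 2 / 2 + (s / N) ^ 3 / 6 := by
          rw [hq]; linarith
      _ ≤ Real.exp (s / N) := by rw [← hsum]; exact h4
  have hlog : Real.log ((N + s + L) / N) < s / N := (Real.log_lt_iff_lt_exp hx0).mpr hexp
  calc N * Real.log ((N + s + L) / N) < N * (s / N) := by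
        exact (mul_lt_mul_iff_right₀ hN0).mpr hlog
    _ = s := by field_simp

end Aux

/-- **Lemma 25 of the paper**: concentration of products of independent uniforms on `[0,1]`:
`P(∏ U_i < δ e^{-n - √(2n ln(1/δ))}) < δ`. -/
theorem product_uniform_concentration (n : ℕ) {δ : ℝ} (hδ : δ ∈ Set.Ioo (0 : ℝ) 1) :
    (Measure.pi fun _ : Fin n => volume.restrict (Set.Icc (0 : ℝ) 1))
        {v | ∏ i : Fin n, v i
          < δ * Real.exp (-(n : ℝ) - Real.sqrt (2 * n * Real.log (1 / δ)))}
      < ENNReal.ofReal δ := by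
  obtain ⟨hδ0, hδ1⟩ := hδ
  rcases Nat.eq_zero_or_pos n with hn | hn
  · subst hn
    have hempty : {v : Fin 0 → ℝ | ∏ i : Fin 0, v i
        < δ * Real.exp (-((0:ℕ) : ℝ) - Real.sqrt (2 * (0:ℕ) * Real.log (1 / δ)))} = ∅ := by
      ext v
      simp only [Finset.univ_eq_empty, Finset.prod_empty, Set.mem_setOf_eq,
        Set.mem_empty_iff_false, iff_false, not_lt, Nat.cast_zero, mul_zero, zero_mul,
        Real.sqrt_zero, neg_zero, zero_sub, sub_zero, Real.exp_zero, mul_one]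
      exact hδ1.le
    rw [hempty]
    simpa using ENNReal.ofReal_pos.mpr hδ0
  · set N : ℝ := (n : ℝ) with hNdef
    have hN1 : 1 ≤ N := by exact_mod_cast Nat.one_le_cast.mpr hn
    have hN0 : 0 < N := by linarith
    set L : ℝ := Real.log (1 / δ) with hLdef
    have hL : 0 < L := Real.log_pos (one_lt_one_div hδ0 hδ1)
    have hδexp : δ = Real.exp (-L) := by
      rw [hLdef, one_div, Real.log_inv, neg_neg, Real.exp_log hδ0]
    set s : ℝ := Real.sqrt (2 * N * L) with hsdef
    have hs0 : 0 < s := Real.sqrt_pos.mpr (by positivity)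
    set l : ℝ := (s + L) / (N + s + L) with hldef
    have hxpos : 0 < N + s + L := by linarith
    have hl0 : 0 < l := by positivity
    have hl1 : l < 1 := by
      rw [hldef, div_lt_one hxpos]; linarith
    have h1l : 1 - l = N / (N + s + L) := by
      rw [hldef]; field_simp; ring
    have hlx : l * (N + s + L) = s + L := by
      rw [hldef]; field_simp
    set t : ℝ := δ * Real.exp (-N - s) with htdef
    have ht : t = Real.exp (-(L + N + s)) := by
      rw [htdef, hδexp, ← Real.exp_add]; ring_nf
    have ht0 : 0 < t := by rw [ht]; exact Real.exp_pos _
    set μ1 : Measure ℝ := volume.restrict (Set.Icc (0 : ℝ) 1) with hμ1def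
    have hμ1fin : IsFiniteMeasure μ1 := by
      constructor
      rw [hμ1def, Measure.restrict_apply_univ, Real.volume_Icc]
      norm_num
    set G : ℝ → ℝ≥0∞ := fun x => ENNReal.ofReal (x ^ (-l)) with hGdef
    have hG : Measurable G := by
      exact ENNReal.measurable_ofReal.comp (measurable_id.pow measurable_const)
    set E : Set (Fin n → ℝ) := {v | ∏ i : Fin n, v i < t} with hEdef
    have hE : MeasurableSet E :=
      measurableSet_lt (Finset.measurable_prod Finset.univ fun i _ => measurable_pi_apply i)
        measurable_const
    set μ : Measure (Fin n → ℝ) := Measure.pi fun _ : Fin n => μ1 with hμdef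
    -- a.e. every coordinate is in (0,1]
    have hmem : ∀ᵐ v ∂μ, ∀ i, v i ∈ Set.Ioc (0:ℝ) 1 := by
      rw [MeasureTheory.ae_all_iff]
      intro i
      have h1 : ∀ᵐ x ∂μ1, x ∈ Set.Ioc (0:ℝ) 1 := by
        have ha : ∀ᵐ x ∂μ1, x ∈ Set.Icc (0:ℝ) 1 := ae_restrict_mem measurableSet_Icc
        have hb : ∀ᵐ x ∂μ1, x ∉ ({0} : Set ℝ) :=
          compl_mem_ae_iff.mpr (measure_singleton 0)
        filter_upwards [ha, hb] with x hx hx0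
        have hx0' : x ≠ 0 := by simpa using hx0
        exact ⟨lt_of_le_of_ne hx.1 (Ne.symm hx0'), hx.2⟩
      exact Measure.tendsto_eval_ae_ae.eventually h1
    -- pointwise bound
    have hae : ∀ᵐ v ∂μ, E.indicator (1 : (Fin n → ℝ) → ℝ≥0∞) v
        ≤ ENNReal.ofReal (Real.exp (-(s + L))) * ∏ i, G (v i) := by
      filter_upwards [hmem] with v hv
      by_cases hvE : v ∈ E
      · rw [Set.indicator_of_mem hvE]
        simp only [Pi.one_apply]
        have hvpos : ∀ i, (0:ℝ) < v i := fun i => (hv i).1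
        have hP0 : 0 < ∏ i : Fin n, v i := Finset.prod_pos fun i _ => hvpos i
        have hprod : (∏ i, G (v i)) = ENNReal.ofReal ((∏ i : Fin n, v i) ^ (-l)) := by
          rw [hGdef]
          rw [← ENNReal.ofReal_prod_of_nonneg
            (fun i _ => Real.rpow_nonneg (hvpos i).le _)]
          rw [Real.finset_prod_rpow Finset.univ _ (fun i _ => (hvpos i).le)]
        rw [hprod, ← ENNReal.ofReal_mul (Real.exp_pos _).le]
        rw [show (1:ℝ≥0∞) = ENNReal.ofReal 1 by simp]
        apply ENNReal.ofReal_le_ofReal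
        have hPt : (∏ i : Fin n, v i) ≤ t := le_of_lt hvE
        have hanti : t ^ (-l) ≤ (∏ i : Fin n, v i) ^ (-l) :=
          Real.rpow_le_rpow_of_nonpos hP0 hPt (by linarith)
        have htl : t ^ (-l) = Real.exp (s + L) := by
          rw [Real.rpow_def_of_pos ht0, ht, Real.log_exp]
          congr 1
          nlinarith [hlx]
        calc (1:ℝ) = Real.exp (-(s + L)) * Real.exp (s + L) := by
              rw [← Real.exp_add, show -(s + L) + (s + L) = 0 by ring, Real.exp_zero]
          _ ≤ Real.exp (-(s + L)) * (∏ i : Fin n, v i) ^ (-l) := by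
              rw [← htl]
              exact mul_le_mul_of_nonneg_left hanti (Real.exp_pos _).le
      · rw [Set.indicator_of_notMem hvE]
        exact zero_le
    -- Chernoff
    have hmeas_prod : Measurable fun v : Fin n → ℝ => ∏ i, G (v i) :=
      Finset.measurable_prod Finset.univ fun i _ => hG.comp (measurable_pi_apply i)
    have hchain : μ E ≤ ENNReal.ofReal (Real.exp (-(s + L))) * (∫⁻ x, G x ∂μ1) ^ n := by
      calc μ E = ∫⁻ v, E.indicator (1 : (Fin n → ℝ) → ℝ≥0∞) v ∂μ := by
            rw [lintegral_indicator_one hE]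
        _ ≤ ∫⁻ v, ENNReal.ofReal (Real.exp (-(s + L))) * ∏ i, G (v i) ∂μ :=
            lintegral_mono_ae hae
        _ = ENNReal.ofReal (Real.exp (-(s + L))) * ∫⁻ v, ∏ i, G (v i) ∂μ :=
            lintegral_const_mul _ hmeas_prod
        _ = ENNReal.ofReal (Real.exp (-(s + L))) * (∫⁻ x, G x ∂μ1) ^ n := by
            rw [lintegral_pi_prod_eq_pow hG]
    -- compute the one-dimensional integral
    have hint : ∫⁻ x, G x ∂μ1 = ENNReal.ofReal (1 / (1 - l)) := by
      have hIoc : IntegrableOn (fun x : ℝ => x ^ (-l)) (Set.Ioc (0:ℝ) 1) volume := by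
        have h := intervalIntegral.intervalIntegrable_rpow' (a := 0) (b := 1)
          (show (-1:ℝ) < -l by linarith)
        simpa [intervalIntegrable_iff, Set.uIoc_of_le (zero_le_one' ℝ)] using h
      have hIcc : IntegrableOn (fun x : ℝ => x ^ (-l)) (Set.Icc (0:ℝ) 1) volume :=
        hIoc.congr_set_ae Ioc_ae_eq_Icc.symm
      have hnn : 0 ≤ᵐ[μ1] fun x : ℝ => x ^ (-l) := by
        filter_upwards [ae_restrict_mem (measurableSet_Icc :
          MeasurableSet (Set.Icc (0:ℝ) 1))] with x hx
        exact Real.rpow_nonneg hx.1 _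
      rw [hGdef, hμ1def, ← MeasureTheory.ofReal_integral_eq_lintegral_ofReal hIcc hnn]
      congr 1
      have h1 : ∫ x in Set.Icc (0:ℝ) 1, x ^ (-l) = ∫ x in Set.Ioc (0:ℝ) 1, x ^ (-l) :=
        (setIntegral_congr_set Ioc_ae_eq_Icc).symm
      have h2 : ∫ x in Set.Ioc (0:ℝ) 1, x ^ (-l) = ∫ x in (0:ℝ)..1, x ^ (-l) :=
        (intervalIntegral.integral_of_le (zero_le_one' ℝ)).symm
      rw [h1, h2, integral_rpow (Or.inl (by linarith))]
      rw [Real.one_rpow, Real.zero_rpow (by linarith : -l + 1 ≠ 0)]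
      ring
    -- the final numeric inequality
    have hfinal : ENNReal.ofReal (Real.exp (-(s + L))) * (ENNReal.ofReal (1 / (1 - l))) ^ n
        < ENNReal.ofReal δ := by
      have h1l' : 1 / (1 - l) = (N + s + L) / N := by
        rw [h1l]; field_simp
      have hpos1 : (0:ℝ) ≤ 1 / (1 - l) := by rw [h1l']; positivity
      rw [← ENNReal.ofReal_pow hpos1, ← ENNReal.ofReal_mul (Real.exp_pos _).le]
      apply (ENNReal.ofReal_lt_ofReal_iff hδ0).mpr
      rw [h1l', hδexp]
      have hxN : 0 < (N + s + L) / N := by positivity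
      have hpow : ((N + s + L) / N) ^ n = Real.exp (N * Real.log ((N + s + L) / N)) := by
        rw [hNdef, ← Real.log_pow, Real.exp_log (by positivity)]
      rw [hpow, ← Real.exp_add]
      apply Real.exp_lt_exp.mpr
      have := key_log_ineq hN1 hL
      rw [← hsdef] at this
      linarith
    -- conclude
    calc μ E ≤ ENNReal.ofReal (Real.exp (-(s + L))) * (∫⁻ x, G x ∂μ1) ^ n := hchain
      _ = ENNReal.ofReal (Real.exp (-(s + L))) * (ENNReal.ofReal (1 / (1 - l))) ^ n := by
          rw [hint]
      _ < ENNReal.ofReal δ := hfinal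
end

section
/- Let X ⊂ ℝ^d be a compact convex set with nonempty interior, let f : X → ℝ have a continuous induced ranking rule and attain its maximum on X, and let (X_1, …, X_n) be a RankOpt-type process for f on X. Then for every ε > 0, P(max_{1≤i≤n} f(X_i) < max_{x∈X} f(x) − ε) ≤ (1 − μ(X_ε)/μ(X))^n, where X_ε = {x ∈ X : f(x) ≥ max_{x'∈X} f(x') − ε}. -/
open MeasureTheory ProbabilityTheory Set
open scoped ENNReal NNReal BigOperators

section AuxLemmas

open MeasureTheory ProbabilityTheory Set

/-- Upper level sets of a function with continuous induced ranking rule on a compact set are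
measurable. -/
lemma measurableSet_upper_level {d : ℕ} {Xset : Set (Euc d)} (hXcomp : IsCompact Xset)
    {f : Euc d → ℝ} (hf : HasContinuousRanking Xset f) (a : ℝ) :
    MeasurableSet {x ∈ Xset | a ≤ f x} := by
  obtain ⟨h, hcont, hsign⟩ := hf
  have hXm : MeasurableSet Xset := hXcomp.isClosed.measurableSet
  rcases eq_empty_or_nonempty {x ∈ Xset | a ≤ f x} with hEe | ⟨z0, hz0⟩
  · rw [hEe]; exact MeasurableSet.empty
  have hmono : ∀ x ∈ Xset, ∀ z ∈ Xset, h z ≤ h x → f z ≤ f x := by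
    intro x hx z hz hzx
    by_contra hlt
    push_neg at hlt
    have h1 : Real.sign (f x - f z) = -1 := Real.sign_of_neg (by linarith)
    rw [hsign x hx z hz] at h1
    rcases lt_trichotomy (h x - h z) 0 with hc | hc | hc
    · linarith
    · rw [hc, Real.sign_zero] at h1; norm_num at h1
    · rw [Real.sign_of_pos hc] at h1; norm_num at h1
  set U := {u : ℝ | ∃ z, (z ∈ Xset ∧ a ≤ f z) ∧ h z ≤ u} with hUdef
  have hUne : h z0 ∈ U := ⟨z0, hz0, le_rfl⟩
  have hbdd : BddBelow U := by
    obtain ⟨b, hb⟩ := (hXcomp.image_of_continuousOn hcont).bddBelow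
    exact ⟨b, fun u hu => by
      obtain ⟨z, hzE, hzu⟩ := hu
      exact le_trans (hb ⟨z, hzE.1, rfl⟩) hzu⟩
  have hup : ∀ u v, u ∈ U → u ≤ v → v ∈ U := by
    rintro u v ⟨z, hz, hzu⟩ huv; exact ⟨z, hz, hzu.trans huv⟩
  set s := sInf U with hsdef
  have hIoi : Ioi s ⊆ U := by
    intro u hu
    obtain ⟨v, hvU, hvu⟩ := exists_lt_of_csInf_lt ⟨_, hUne⟩ hu
    exact hup v u hvU hvu.le
  have hEU : {x ∈ Xset | a ≤ f x} = Xset ∩ h ⁻¹' U := by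
    ext x
    constructor
    · intro hx; exact ⟨hx.1, x, hx, le_rfl⟩
    · rintro ⟨hx, z, hzE, hzx⟩
      exact ⟨hx, le_trans hzE.2 (hmono x hx z hzE.1 hzx)⟩
  by_cases hsU : s ∈ U
  · have hUeq : U = Ici s :=
      Subset.antisymm (fun u hu => csInf_le hbdd hu) (fun u hu => hup s u hsU hu)
    obtain ⟨O, hOopen, hOeq⟩ := (continuousOn_iff'.mp hcont) (Iio s) isOpen_Iio
    have hE2 : {x ∈ Xset | a ≤ f x} = Xset \ (O ∩ Xset) := by
      rw [hEU, hUeq]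
      ext x
      simp only [mem_inter_iff, mem_preimage, mem_Ici, mem_diff]
      constructor
      · rintro ⟨hx, hsx⟩
        refine ⟨hx, fun hOx => ?_⟩
        have hx2 : x ∈ h ⁻¹' Iio s ∩ Xset := by rw [hOeq]; exact ⟨hOx.1, hx⟩
        exact absurd hx2.1 (by simp only [mem_preimage, mem_Iio, not_lt]; exact hsx)
      · rintro ⟨hx, hnO⟩
        refine ⟨hx, ?_⟩
        by_contra hlt
        push_neg at hlt
        have hx2 : x ∈ O ∩ Xset := by rw [← hOeq]; exact ⟨hlt, hx⟩
        exact hnO hx2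
    rw [hE2]
    exact hXm.diff (hOopen.measurableSet.inter hXm)
  · have hUeq : U = Ioi s := by
      refine Subset.antisymm (fun u hu => ?_) hIoi
      rcases lt_or_eq_of_le (csInf_le hbdd hu) with h' | h'
      · exact h'
      · exact absurd (by rwa [← h'] at hu) hsU
    obtain ⟨O, hOopen, hOeq⟩ := (continuousOn_iff'.mp hcont) (Ioi s) isOpen_Ioi
    have hE2 : {x ∈ Xset | a ≤ f x} = O ∩ Xset := by
      rw [hEU, hUeq, ← hOeq]
      ext x
      simp only [mem_inter_iff, mem_preimage]
      tauto
    rw [hE2]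
    exact hOopen.measurableSet.inter hXm

/-- Joint law of `(Y, Z)` disintegrates via `condDistrib Z Y P`. -/
lemma prob_inter_eq_lintegral_condDistrib {Ω' : Type*} [MeasurableSpace Ω'] {P : Measure Ω'}
    [IsFiniteMeasure P] {β γ : Type*} [MeasurableSpace β] [MeasurableSpace γ]
    [StandardBorelSpace γ] [Nonempty γ]
    {Y : Ω' → β} {Z : Ω' → γ} (hY : Measurable Y) (hZ : Measurable Z)
    {C : Set β} (hC : MeasurableSet C) {B : Set γ} (hB : MeasurableSet B) :
    P (Y ⁻¹' C ∩ Z ⁻¹' B) = ∫⁻ ω in Y ⁻¹' C, condDistrib Z Y P (Y ω) B ∂P := by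
  have hmap : P.map (fun ω => (Y ω, Z ω)) = (P.map Y) ⊗ₘ condDistrib Z Y P := by
    conv_lhs => rw [← Measure.disintegrate (P.map (fun ω => (Y ω, Z ω))) (P.map (fun ω => (Y ω, Z ω))).condKernel]
    rw [Measure.fst_map_prodMk hZ, condDistrib]
  have h1 : Y ⁻¹' C ∩ Z ⁻¹' B = (fun ω => (Y ω, Z ω)) ⁻¹' (C ×ˢ B) := by
    ext ω; simp [Set.mem_prod]
  rw [h1, ← Measure.map_apply (hY.prodMk hZ) (hC.prod hB), hmap,
    Measure.compProd_apply_prod hC hB,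
    setLIntegral_map hC (Kernel.measurable_coe _ hB) hY]

end AuxLemmas

/-- **Key inequality in the consistency proof of RankOpt**:
`P(max_i f(X_i) < max f - ε) ≤ (1 - μ(X_ε)/μ(X))^n`. -/
theorem rankopt_exploration_bound
    {d : ℕ} {Xset : Set (Euc d)} (hXcomp : IsCompact Xset) (hXconv : Convex ℝ Xset)
    (hXint : (interior Xset).Nonempty)
    {f : Euc d → ℝ} (hf : HasContinuousRanking Xset f)
    {xM : Euc d} (hxM : xM ∈ Xset) (hmax : ∀ x ∈ Xset, f x ≤ f xM)
    {Ω : Type*} [MeasurableSpace Ω] {P : Measure Ω} [IsProbabilityMeasure P]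
    {n : ℕ} {X : Fin n → Ω → Euc d}
    (hproc : IsRankOptProcess P Xset f n X)
    {ε : ℝ} (hε : 0 < ε) :
    P {ω | ∀ i : Fin n, f (X i ω) < f xM - ε}
      ≤ ENNReal.ofReal
          ((1 - (volume {x ∈ Xset | f xM - ε ≤ f x} / volume Xset).toReal) ^ n) := by
  classical
  obtain ⟨hXm', hinit, hstep⟩ := hproc
  have hXsetM : MeasurableSet Xset := hXcomp.isClosed.measurableSet
  set Xε : Set (Euc d) := {x ∈ Xset | f xM - ε ≤ f x} with hXεdef
  have hXεM : MeasurableSet Xε := measurableSet_upper_level hXcomp hf _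
  have hXεsub : Xε ⊆ Xset := fun x hx => hx.1
  set S : Set (Euc d) := Xset \ Xε with hSdef
  have hSM : MeasurableSet S := hXsetM.diff hXεM
  have hfin : volume Xset ≠ ⊤ := hXcomp.measure_lt_top.ne
  set q : ℝ≥0∞ := volume Xε / volume Xset with hqdef
  have hq1 : q ≤ 1 :=
    ENNReal.div_le_of_le_mul (by rw [one_mul]; exact measure_mono hXεsub)
  have hqfin : q ≠ ⊤ := (lt_of_le_of_lt hq1 ENNReal.one_lt_top).ne
  set c : ℝ≥0∞ := 1 - q with hcdef
  have hrhs : ENNReal.ofReal ((1 - q.toReal) ^ n) = c ^ n := by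
    have hqr : q.toReal ≤ 1 := by
      have := ENNReal.toReal_mono (by simp) hq1
      simpa using this
    rw [ENNReal.ofReal_pow (by linarith), ENNReal.ofReal_sub _ ENNReal.toReal_nonneg,
      ENNReal.ofReal_one, ENNReal.ofReal_toReal hqfin, hcdef]
  rw [hrhs]
  rcases Nat.eq_zero_or_pos n with rfl | hn
  · have huniv : {ω | ∀ i : Fin 0, f (X i ω) < f xM - ε} = univ :=
      eq_univ_of_forall fun ω i => i.elim0
    rw [huniv, measure_univ, pow_zero]
  have hpos : 0 < volume Xset :=
    lt_of_lt_of_le (isOpen_interior.measure_pos volume hXint) (measure_mono interior_subset)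
  -- key deterministic bound
  have key : ∀ A : Set (Euc d), 0 < volume A → A ⊆ Xset → Xε ⊆ A → unifOn A S ≤ c := by
    intro A hA0 hAX hXA
    have hAfin : volume A ≠ ⊤ := (lt_of_le_of_lt (measure_mono hAX) hfin.lt_top).ne
    have hεfin : volume Xε ≠ ⊤ := (lt_of_le_of_lt (measure_mono hXεsub) hfin.lt_top).ne
    have hUA : unifOn A S = (volume A)⁻¹ * volume (S ∩ A) := by
      rw [unifOn, Measure.smul_apply, Measure.restrict_apply hSM, smul_eq_mul]
    have hdiff : volume (S ∩ A) ≤ volume A - volume Xε := by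
      refine le_trans (measure_mono (show S ∩ A ⊆ A \ Xε from fun x hx => ⟨hx.2, hx.1.2⟩)) ?_
      rw [measure_diff hXA hXεM.nullMeasurableSet hεfin]
    rw [hcdef]
    refine ENNReal.le_sub_of_add_le_left hqfin ?_
    calc q + unifOn A S
        ≤ (volume A)⁻¹ * volume Xε + (volume A)⁻¹ * (volume A - volume Xε) := by
          refine add_le_add ?_ ?_
          · rw [hqdef, ENNReal.div_eq_inv_mul]
            exact mul_le_mul_left (ENNReal.inv_le_inv' (measure_mono hAX)) _
          · rw [hUA]; exact mul_le_mul_right hdiff _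
      _ = (volume A)⁻¹ * (volume Xε + (volume A - volume Xε)) := by rw [mul_add]
      _ = (volume A)⁻¹ * volume A := by rw [add_tsub_cancel_of_le (measure_mono hXA)]
      _ = 1 := ENNReal.inv_mul_cancel hA0.ne' hAfin
  -- the process stays in Xset almost surely
  have hXi0 : P (X ⟨0, hn⟩ ⁻¹' Xsetᶜ) = 0 := by
    rw [← Measure.map_apply (hXm' _) hXsetM.compl, hinit hn, unifOn, Measure.smul_apply,
      Measure.restrict_apply hXsetM.compl, compl_inter_self, measure_empty, smul_eq_mul, mul_zero]
  have hXisucc : ∀ (t : ℕ) (ht : t + 1 < n), P (X ⟨t + 1, ht⟩ ⁻¹' Xsetᶜ) = 0 := by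
    intro t ht
    have hYm : Measurable (fun ω => fun i : Fin (t + 1) => X (Fin.castLE ht.le i) ω) :=
      measurable_pi_lambda _ fun i => hXm' _
    have heq := prob_inter_eq_lintegral_condDistrib (P := P) hYm (hXm' ⟨t + 1, ht⟩)
      MeasurableSet.univ hXsetM.compl
    rw [preimage_univ, univ_inter, Measure.restrict_univ] at heq
    rw [heq]
    have hae : ∀ᵐ ω ∂P,
        condDistrib (X ⟨t + 1, ht⟩)
          (fun ω' => fun i : Fin (t + 1) => X (Fin.castLE ht.le i) ω') P
          ((fun ω' => fun i : Fin (t + 1) => X (Fin.castLE ht.le i) ω') ω) Xsetᶜ = 0 := by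
      filter_upwards [hstep t ht] with ω hω
      obtain ⟨A, hAm, hA0, hsub1, hsub2, hκ⟩ := hω
      show condDistrib (X ⟨t + 1, ht⟩)
          (fun ω' => fun i : Fin (t + 1) => X (Fin.castLE ht.le i) ω') P
          (fun i : Fin (t + 1) => X (Fin.castLE ht.le i) ω) Xsetᶜ = 0
      rw [hκ, unifOn, Measure.smul_apply, Measure.restrict_apply hXsetM.compl, smul_eq_mul]
      have hAe : Xsetᶜ ∩ A = ∅ := by
        rw [eq_empty_iff_forall_notMem]
        rintro x ⟨hxc, hxA⟩
        exact hxc (hsub2 hxA)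
      rw [hAe, measure_empty, mul_zero]
    rw [lintegral_congr_ae hae, lintegral_zero]
  have hG : P {ω | ¬ ∀ i : Fin n, X i ω ∈ Xset} = 0 := by
    have hGe : {ω | ¬ ∀ i : Fin n, X i ω ∈ Xset} = ⋃ i : Fin n, X i ⁻¹' Xsetᶜ := by
      ext ω; simp [not_forall]
    rw [hGe]
    refine measure_iUnion_null fun i => ?_
    rcases i with ⟨iv, hiv⟩
    cases iv with
    | zero => exact hXi0
    | succ t => exact hXisucc t hiv
  -- the events
  set E : ℕ → Set Ω := fun t => {ω | ∀ i : Fin n, (i : ℕ) < t → X i ω ∈ S} with hEdef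
  -- one-step bound
  have step2 : ∀ (t : ℕ) (ht : t + 1 < n), P (E (t + 2)) ≤ c * P (E (t + 1)) := by
    intro t ht
    have hYm : Measurable (fun ω => fun i : Fin (t + 1) => X (Fin.castLE ht.le i) ω) :=
      measurable_pi_lambda _ fun i => hXm' _
    set C : Set (Fin (t + 1) → Euc d) := {v | ∀ i, v i ∈ S} with hCdef
    have hC : MeasurableSet C := by
      have : C = ⋂ i : Fin (t + 1), (fun v : Fin (t + 1) → Euc d => v i) ⁻¹' S := by
        ext v; simp [hCdef]
      rw [this]
      exact MeasurableSet.iInter fun i => (measurable_pi_apply i) hSM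
    have hE1 : E (t + 1) = (fun ω => fun i : Fin (t + 1) => X (Fin.castLE ht.le i) ω) ⁻¹' C := by
      ext ω
      simp only [hEdef, hCdef, mem_setOf_eq, mem_preimage]
      constructor
      · intro hω j
        exact hω (Fin.castLE ht.le j) j.isLt
      · intro hω i hi
        have : i = Fin.castLE ht.le ⟨(i : ℕ), hi⟩ := by
          apply Fin.ext; rfl
        rw [this]
        exact hω ⟨(i : ℕ), hi⟩
    have hE2 : E (t + 2) =
        (fun ω => fun i : Fin (t + 1) => X (Fin.castLE ht.le i) ω) ⁻¹' C ∩
          X ⟨t + 1, ht⟩ ⁻¹' S := by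
      ext ω
      simp only [hEdef, hCdef, mem_setOf_eq, mem_preimage, mem_inter_iff]
      constructor
      · intro hω
        refine ⟨fun j => hω (Fin.castLE ht.le j) (show (j : ℕ) < t + 2 by omega),
          hω ⟨t + 1, ht⟩ (show t + 1 < t + 2 by omega)⟩
      · rintro ⟨h1, h2⟩ i hi
        rcases Nat.lt_or_ge (i : ℕ) (t + 1) with hi' | hi'
        · have : i = Fin.castLE ht.le ⟨(i : ℕ), hi'⟩ := by apply Fin.ext; rfl
          rw [this]; exact h1 ⟨(i : ℕ), hi'⟩
        · have hieq : i = ⟨t + 1, ht⟩ := by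
            apply Fin.ext
            show (i : ℕ) = t + 1
            omega
          rw [hieq]; exact h2
    rw [hE2, prob_inter_eq_lintegral_condDistrib (P := P) hYm (hXm' ⟨t + 1, ht⟩) hC hSM]
    have hmono : ∫⁻ ω in (fun ω => fun i : Fin (t + 1) => X (Fin.castLE ht.le i) ω) ⁻¹' C,
        condDistrib (X ⟨t + 1, ht⟩)
          (fun ω' => fun i : Fin (t + 1) => X (Fin.castLE ht.le i) ω') P
          ((fun ω' => fun i : Fin (t + 1) => X (Fin.castLE ht.le i) ω') ω) S ∂P
        ≤ ∫⁻ _ in (fun ω => fun i : Fin (t + 1) => X (Fin.castLE ht.le i) ω) ⁻¹' C, c ∂P := by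
      refine setLIntegral_mono_ae aemeasurable_const ?_
      filter_upwards [hstep t ht] with ω hω hωC
      obtain ⟨A, hAm, hA0, hsub1, hsub2, hκ⟩ := hω
      show condDistrib (X ⟨t + 1, ht⟩)
          (fun ω' => fun i : Fin (t + 1) => X (Fin.castLE ht.le i) ω') P
          (fun i : Fin (t + 1) => X (Fin.castLE ht.le i) ω) S ≤ c
      rw [hκ]
      refine key A hA0 hsub2 ?_
      intro x hx
      refine hsub1 ⟨hx.1, fun i => ?_⟩
      have hSi : X (Fin.castLE ht.le i) ω ∈ S := hωC i
      have : f (X (Fin.castLE ht.le i) ω) < f xM - ε := by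
        by_contra hcon
        push_neg at hcon
        exact hSi.2 ⟨hSi.1, hcon⟩
      exact le_of_lt (lt_of_lt_of_le this hx.2)
    refine le_trans hmono ?_
    rw [setLIntegral_const, hE1]
  -- base bound
  have base : P (E 1) ≤ c := by
    have hE1 : E 1 = X ⟨0, hn⟩ ⁻¹' S := by
      ext ω
      simp only [hEdef, mem_setOf_eq, mem_preimage]
      constructor
      · intro hω; exact hω ⟨0, hn⟩ Nat.zero_lt_one
      · intro hω i hi
        have : i = ⟨0, hn⟩ := by apply Fin.ext; simpa using hi
        rw [this]; exact hω
    rw [hE1, ← Measure.map_apply (hXm' _) hSM, hinit hn]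
    exact key Xset hpos subset_rfl hXεsub
  -- induction
  have main : ∀ t, 1 ≤ t → t ≤ n → P (E t) ≤ c ^ t := by
    intro t
    induction t with
    | zero => intro h; omega
    | succ k ih =>
      intro _ hkn
      rcases Nat.eq_zero_or_pos k with rfl | hk
      · rw [pow_one]; exact base
      · obtain ⟨m, rfl⟩ : ∃ m, k = m + 1 := ⟨k - 1, by omega⟩
        have ht : m + 1 < n := by omega
        calc P (E (m + 2)) ≤ c * P (E (m + 1)) := step2 m ht
          _ ≤ c * c ^ (m + 1) := mul_le_mul_right (ih (by omega) (by omega)) c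
          _ = c ^ (m + 2) := by ring
  -- conclude
  have hsubset : {ω | ∀ i : Fin n, f (X i ω) < f xM - ε}
      ⊆ E n ∪ {ω | ¬ ∀ i : Fin n, X i ω ∈ Xset} := by
    intro ω hω
    by_cases hωG : ∀ i : Fin n, X i ω ∈ Xset
    · left
      intro i _
      exact ⟨hωG i, fun hxε => absurd hxε.2 (not_le.2 (hω i))⟩
    · right; exact hωG
  calc P {ω | ∀ i : Fin n, f (X i ω) < f xM - ε}
      ≤ P (E n ∪ {ω | ¬ ∀ i : Fin n, X i ω ∈ Xset}) := measure_mono hsubset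
    _ ≤ P (E n) + P {ω | ¬ ∀ i : Fin n, X i ω ∈ Xset} := measure_union_le _ _
    _ = P (E n) := by rw [hG, add_zero]
    _ ≤ c ^ n := main n hn le_rfl
end
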